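/- arXiv:1101.5041 — 7 statements merged into one kernel-verified Lean document; each statement's English description precedes it below -/
import Mathlib

section
/- Let J be the 2n×2n real matrix with block form [[0, -I],[I, 0]]. For every L in the real symplectic group Sp(2n,ℝ) = {L : Lᵀ J L = J}, the matrix LᵀL - iJ (viewed as a complex Hermitian matrix) is positive semidefinite; consequently ½LᵀL belongs to K_n = {S real symmetric of order 2n : 2S - iJ ≥ 0}. -/
open Matrix
open scoped ComplexOrder

noncomputable section

/-- The standard symplectic form matrix J = [[0, -I],[I, 0]] of order 2n. -/
def sympJ (n : ℕ) : Matrix (Fin n ⊕ Fin n) (Fin n ⊕ Fin n) ℝ :=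
  Matrix.fromBlocks 0 (-1) 1 0

/-- A real 2n×2n matrix L is symplectic if Lᵀ J L = J. -/
def IsSymplectic {n : ℕ} (L : Matrix (Fin n ⊕ Fin n) (Fin n ⊕ Fin n) ℝ) : Prop :=
  Lᵀ * sympJ n * L = sympJ n

/-- The convex set K_n of Gaussian covariance matrices:
real symmetric S of order 2n with 2S - iJ positive semidefinite (as a complex matrix). -/
def Kset (n : ℕ) : Set (Matrix (Fin n ⊕ Fin n) (Fin n ⊕ Fin n) ℝ) :=
  {S | S.IsSymm ∧
    ((2 : ℂ) • S.map (Complex.ofReal) - Complex.I • (sympJ n).map (Complex.ofReal)).PosSemidef}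

lemma map_ofReal_mul {m : Type*} [Fintype m] (M N : Matrix m m ℝ) :
    (M * N).map Complex.ofReal = M.map Complex.ofReal * N.map Complex.ofReal := by
  ext i j
  simp [Matrix.mul_apply, Matrix.map_apply]

lemma sympJ_mul_self (n : ℕ) : sympJ n * sympJ n = -1 := by
  rw [sympJ, Matrix.fromBlocks_multiply, show (-1 : Matrix (Fin n ⊕ Fin n) (Fin n ⊕ Fin n) ℝ)
      = -(Matrix.fromBlocks 1 0 0 1) by rw [Matrix.fromBlocks_one],
    Matrix.fromBlocks_neg]
  simp

lemma sympJ_transpose (n : ℕ) : (sympJ n)ᵀ = -(sympJ n) := by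
  rw [sympJ, Matrix.fromBlocks_transpose, Matrix.fromBlocks_neg]
  simp

lemma one_sub_I_smul_J_posSemidef (n : ℕ) :
    ((1 : Matrix (Fin n ⊕ Fin n) (Fin n ⊕ Fin n) ℂ)
      - Complex.I • (sympJ n).map (Complex.ofReal)).PosSemidef := by
  set Jc : Matrix (Fin n ⊕ Fin n) (Fin n ⊕ Fin n) ℂ := (sympJ n).map Complex.ofReal with hJc
  set A : Matrix (Fin n ⊕ Fin n) (Fin n ⊕ Fin n) ℂ := 1 - Complex.I • Jc with hA
  have hJcT : Jcᴴ = -Jc := by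
    ext i j
    have h := congrFun (congrFun (sympJ_transpose n) i) j
    simp only [Matrix.transpose_apply, Matrix.neg_apply] at h
    simp [hJc, Matrix.conjTranspose_apply, Matrix.map_apply, h]
  have hJcJc : Jc * Jc = -1 := by
    rw [hJc, ← map_ofReal_mul, sympJ_mul_self]
    ext i j
    by_cases h : i = j <;> simp [Matrix.one_apply, h]
  have hAH : Aᴴ = A := by
    rw [hA, Matrix.conjTranspose_sub, Matrix.conjTranspose_smul, hJcT,
      Matrix.conjTranspose_one]
    simp [smul_neg]
  have hAA : Aᴴ * A = (2 : ℂ) • A := by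
    rw [hAH, hA]
    have hsq : (Complex.I • Jc) * (Complex.I • Jc) = 1 := by
      rw [Matrix.smul_mul, Matrix.mul_smul, smul_smul, Complex.I_mul_I, hJcJc,
        neg_smul, one_smul, neg_neg]
    rw [sub_mul, mul_sub, mul_sub, hsq, one_mul, one_mul, mul_one, two_smul]
    abel
  have hP := Matrix.posSemidef_conjTranspose_mul_self A
  rw [hAA] at hP
  rw [Matrix.posSemidef_iff_dotProduct_mulVec] at hP ⊢
  constructor
  · exact hAH
  · intro x
    have h2 := hP.2 x
    have heq : star x ⬝ᵥ ((2 : ℂ) • A) *ᵥ x = 2 * (star x ⬝ᵥ A *ᵥ x) := by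
      rw [Matrix.smul_mulVec, dotProduct_smul, smul_eq_mul]
    rw [heq] at h2
    have hhalf : (0 : ℂ) ≤ (1 / 2 : ℂ) := by
      rw [Complex.le_def]; norm_num
    have := mul_nonneg hhalf h2
    rwa [show (1 / 2 : ℂ) * (2 * (star x ⬝ᵥ A *ᵥ x)) = star x ⬝ᵥ A *ᵥ x by ring] at this

theorem symplectic_half_LtL_mem_Kset (n : ℕ)
    (L : Matrix (Fin n ⊕ Fin n) (Fin n ⊕ Fin n) ℝ) (hL : IsSymplectic L) :
    ((Lᵀ * L).map (Complex.ofReal) - Complex.I • (sympJ n).map (Complex.ofReal)).PosSemidef ∧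
    (1 / 2 : ℝ) • (Lᵀ * L) ∈ Kset n := by
  set Jc : Matrix (Fin n ⊕ Fin n) (Fin n ⊕ Fin n) ℂ := (sympJ n).map Complex.ofReal with hJc
  set Lc : Matrix (Fin n ⊕ Fin n) (Fin n ⊕ Fin n) ℂ := L.map Complex.ofReal with hLc
  have hLcH : Lcᴴ = Lᵀ.map Complex.ofReal := by
    ext i j; simp [hLc, Matrix.conjTranspose_apply]
  have hsymp : Lcᴴ * Jc * Lc = Jc := by
    rw [hLcH, hJc, hLc, ← map_ofReal_mul, ← map_ofReal_mul, hL]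
  have key : Lcᴴ * ((1 : Matrix (Fin n ⊕ Fin n) (Fin n ⊕ Fin n) ℂ)
      - Complex.I • Jc) * Lc
      = (Lᵀ * L).map Complex.ofReal - Complex.I • Jc := by
    rw [Matrix.mul_sub, Matrix.sub_mul, Matrix.mul_one, Matrix.mul_smul, Matrix.smul_mul,
      hsymp]
    congr 1
    rw [hLcH, hLc, ← map_ofReal_mul]
  have hmain : ((Lᵀ * L).map (Complex.ofReal) - Complex.I • Jc).PosSemidef := by
    rw [← key]
    exact (one_sub_I_smul_J_posSemidef n).conjTranspose_mul_mul_same Lc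
  refine ⟨hmain, ?_, ?_⟩
  · unfold Matrix.IsSymm
    rw [Matrix.transpose_smul, Matrix.transpose_mul, Matrix.transpose_transpose]
  · have heq : (2 : ℂ) • ((1 / 2 : ℝ) • (Lᵀ * L)).map Complex.ofReal
        = (Lᵀ * L).map Complex.ofReal := by
      ext i j
      simp only [Matrix.map_apply, Matrix.smul_apply, smul_eq_mul]
      push_cast
      ring
    rw [heq]
    exact hmain
end
end

section
/- If S ∈ K_n (i.e. S is real symmetric of order 2n with 2S - iJ ≥ 0), then S is strictly positive definite and det S ≥ 4^{-n}. -/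
open Matrix
open scoped ComplexOrder InnerProductSpace

noncomputable section

/-- If `H` is Hermitian with `1 - H ⪰ 0` and `1 + H ⪰ 0`, then `|det H| ≤ 1`. -/
lemma abs_det_le_one_of_pm_one_posSemidef {m : Type*} [Fintype m] [DecidableEq m]
    {H : Matrix m m ℂ}
    (hH : H.IsHermitian) (h1 : ((1 : Matrix m m ℂ) - H).PosSemidef)
    (h2 : ((1 : Matrix m m ℂ) + H).PosSemidef) : ‖H.det‖ ≤ 1 := by
  have habs : ∀ i, |hH.eigenvalues i| ≤ 1 := by
    intro i
    set v := ⇑(hH.eigenvectorBasis i) with hv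
    have hvnorm : RCLike.re (star v ⬝ᵥ v) = 1 := by
      have h := hH.eigenvectorBasis.orthonormal.1 i
      have h2 : ⟪hH.eigenvectorBasis i, hH.eigenvectorBasis i⟫_ℂ = 1 := by
        rw [@inner_self_eq_norm_sq_to_K ℂ, h]; norm_num
      rw [EuclideanSpace.inner_eq_star_dotProduct] at h2
      have : star v ⬝ᵥ v = 1 := by rw [dotProduct_comm]; exact h2
      rw [this]; simp
    have heig : hH.eigenvalues i = RCLike.re (star v ⬝ᵥ (H *ᵥ v)) := hH.eigenvalues_eq i
    have hb1 := h1.re_dotProduct_nonneg v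
    have hb2 := h2.re_dotProduct_nonneg v
    rw [sub_mulVec, one_mulVec, dotProduct_sub, map_sub, hvnorm, ← heig] at hb1
    rw [add_mulVec, one_mulVec, dotProduct_add, map_add, hvnorm, ← heig] at hb2
    rw [abs_le]; constructor <;> linarith
  rw [hH.det_eq_prod_eigenvalues, norm_prod]
  refine Finset.prod_le_one (fun i _ => by positivity) (fun i _ => ?_)
  simpa using habs i

set_option maxHeartbeats 1000000 in
theorem Kset_posDef_and_det_ge (n : ℕ)
    (S : Matrix (Fin n ⊕ Fin n) (Fin n ⊕ Fin n) ℝ) (hS : S ∈ Kset n) :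
    S.PosDef ∧ ((4 : ℝ) ^ n)⁻¹ ≤ S.det := by
  obtain ⟨hsymm, hpsd⟩ := hS
  set J := sympJ n with hJdef
  have hJT : Jᵀ = -J := by
    simp [hJdef, sympJ, fromBlocks_transpose, Matrix.fromBlocks_neg]
  have hJJT : J * Jᵀ = 1 := by
    rw [hJdef]
    show sympJ n * (sympJ n)ᵀ = 1
    simp [sympJ, fromBlocks_transpose, fromBlocks_multiply, ← fromBlocks_one]
  set A : Matrix (Fin n ⊕ Fin n) (Fin n ⊕ Fin n) ℂ :=
    (2 : ℂ) • S.map (Complex.ofReal) - Complex.I • J.map (Complex.ofReal) with hA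
  -- key quadratic inequality
  have key : ∀ x y : (Fin n ⊕ Fin n) → ℝ,
      0 ≤ x ⬝ᵥ S *ᵥ x + y ⬝ᵥ S *ᵥ y + x ⬝ᵥ J *ᵥ y := by
    intro x y
    set z : (Fin n ⊕ Fin n) → ℂ := fun j => (x j : ℂ) + Complex.I * (y j : ℂ) with hz
    have h0 := hpsd.re_dotProduct_nonneg z
    have expand1 : star z ⬝ᵥ (A *ᵥ z)
        = ∑ j, ∑ k, (starRingEnd ℂ) (z j) * ((2*(S j k : ℂ) - Complex.I*(J j k : ℂ)) * z k) := by
      simp only [dotProduct, mulVec, Finset.mul_sum]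
      refine Finset.sum_congr rfl fun j _ => Finset.sum_congr rfl fun k _ => ?_
      simp [hA, Matrix.sub_apply, Matrix.smul_apply, Matrix.map_apply, smul_eq_mul,
        Pi.star_apply, RCLike.star_def]
    have hterm : ∀ a b p q r s : ℝ,
        ((starRingEnd ℂ) ((p : ℂ) + Complex.I*q) *
          ((2*(a : ℂ) - Complex.I*b) * ((r : ℂ) + Complex.I*s))).re
        = 2*a*(p*r+q*s) + b*(p*s - q*r) := by
      intros a b p q r s
      simp [Complex.mul_re, Complex.mul_im, map_add, _root_.map_mul, Complex.conj_I,
        Complex.conj_ofReal]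
      ring
    have hre : RCLike.re (star z ⬝ᵥ (A *ᵥ z))
        = ∑ j, ∑ k, (2*S j k*(x j*x k + y j*y k) + J j k*(x j*y k - y j*x k)) := by
      rw [expand1]
      rw [RCLike.re_to_complex, Complex.re_sum]
      refine Finset.sum_congr rfl fun j _ => ?_
      rw [Complex.re_sum]
      refine Finset.sum_congr rfl fun k _ => ?_
      exact hterm (S j k) (J j k) (x j) (y j) (x k) (y k)
    have hsum : ∑ j, ∑ k, (2*S j k*(x j*x k + y j*y k) + J j k*(x j*y k - y j*x k))
        = 2*(x ⬝ᵥ S *ᵥ x) + 2*(y ⬝ᵥ S *ᵥ y) + (x ⬝ᵥ J *ᵥ y) - (y ⬝ᵥ J *ᵥ x) := by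
      simp only [dotProduct, mulVec, Finset.mul_sum, ← Finset.sum_add_distrib,
        ← Finset.sum_sub_distrib]
      refine Finset.sum_congr rfl fun j _ => Finset.sum_congr rfl fun k _ => by ring
    have hanti : y ⬝ᵥ J *ᵥ x = - (x ⬝ᵥ J *ᵥ y) := by
      have h1 : y ⬝ᵥ J *ᵥ x = x ⬝ᵥ Jᵀ *ᵥ y := by
        rw [dotProduct_mulVec, ← mulVec_transpose, dotProduct_comm]
      rw [h1, hJT, neg_mulVec, dotProduct_neg]
    rw [hre, hsum, hanti] at h0
    linarith
  -- positive definiteness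
  have hpd : S.PosDef := by
    refine Matrix.PosDef.of_dotProduct_mulVec_pos ?_ ?_
    · rw [Matrix.IsHermitian, conjTranspose_eq_transpose_of_trivial]
      exact hsymm
    · intro x hx
      rw [star_trivial]
      set w : (Fin n ⊕ Fin n) → ℝ := Jᵀ *ᵥ x with hw
      set a := x ⬝ᵥ S *ᵥ x with ha
      set b := x ⬝ᵥ x with hb
      set c := w ⬝ᵥ S *ᵥ w with hc
      have hc0 : 0 ≤ c := by
        have := key 0 w
        simpa [hc] using this
      have hb0 : 0 < b := by
        refine lt_of_le_of_ne (Finset.sum_nonneg fun i _ => mul_self_nonneg _) ?_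
        intro h
        exact hx (dotProduct_self_eq_zero.mp h.symm)
      have hJw : J *ᵥ w = x := by
        rw [hw, mulVec_mulVec, hJJT, one_mulVec]
      have hquad : ∀ t : ℝ, 0 ≤ c * (t * t) + (-b) * t + a := by
        intro t
        have h := key x ((-t) • w)
        have e1 : ((-t) • w) ⬝ᵥ S *ᵥ ((-t) • w) = t * t * c := by
          rw [smul_dotProduct, mulVec_smul, dotProduct_smul]
          simp [hc]; ring
        have e2 : x ⬝ᵥ J *ᵥ ((-t) • w) = -t * b := by
          rw [mulVec_smul, dotProduct_smul, hJw]
          simp [hb]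
        rw [e1, e2] at h
        nlinarith [h]
      have hdisc := discrim_le_zero hquad
      rw [discrim] at hdisc
      by_contra hcon
      push_neg at hcon
      nlinarith [mul_nonneg hc0 (neg_nonneg.mpr hcon), hb0]
  refine ⟨hpd, ?_⟩
  -- determinant bound
  set M : Matrix (Fin n ⊕ Fin n) (Fin n ⊕ Fin n) ℝ := (2 : ℝ) • S with hM
  have hMpd : M.PosDef := by
    refine Matrix.PosDef.of_dotProduct_mulVec_pos ?_ (fun v hv => ?_)
    · rw [Matrix.IsHermitian, conjTranspose_smul, hpd.1]
      norm_num
      rfl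
    · have h := hpd.dotProduct_mulVec_pos hv
      rw [hM, smul_mulVec, dotProduct_smul]
      rw [smul_eq_mul]
      linarith [h]
  have hsq : ∃ B : Matrix (Fin n ⊕ Fin n) (Fin n ⊕ Fin n) ℝ, B.PosSemidef ∧ B * B = M := by
    open scoped MatrixOrder in
    exact ⟨CFC.sqrt M, (CFC.sqrt_nonneg M).posSemidef,
      CFC.sqrt_mul_sqrt_self M hMpd.posSemidef.nonneg⟩
  obtain ⟨B, hB1, hBB⟩ := hsq
  have hdetM : 0 < M.det := hMpd.det_pos
  have hdetB : B.det ≠ 0 := by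
    intro h
    rw [← hBB, det_mul, h, mul_zero] at hdetM
    exact lt_irrefl _ hdetM
  set R := B⁻¹ with hR
  have hRdet : R.det ≠ 0 := by
    rw [hR, det_nonsing_inv, Ring.inverse_eq_inv']
    exact inv_ne_zero hdetB
  have hBsymm : Bᵀ = B := by
    have := hB1.isHermitian
    rwa [Matrix.IsHermitian, conjTranspose_eq_transpose_of_trivial] at this
  have hRsymm : Rᵀ = R := by
    rw [hR, transpose_nonsing_inv, hBsymm]
  have hRMR : R * M * R = 1 := by
    rw [← hBB, hR]
    have : B⁻¹ * (B * B) * B⁻¹ = (B⁻¹ * B) * (B * B⁻¹) := by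
      noncomm_ring
    rw [this, nonsing_inv_mul _ (isUnit_iff_ne_zero.mpr hdetB), mul_nonsing_inv _ (isUnit_iff_ne_zero.mpr hdetB), one_mul]
  -- complexification
  set Sc := S.map Complex.ofReal with hSc
  set Jc := J.map Complex.ofReal with hJc
  set Rc := R.map Complex.ofReal with hRc
  set K : Matrix (Fin n ⊕ Fin n) (Fin n ⊕ Fin n) ℝ := R * J * R with hK
  set Kc := K.map Complex.ofReal with hKc
  have hmap_mul : ∀ P Q : Matrix (Fin n ⊕ Fin n) (Fin n ⊕ Fin n) ℝ,
      (P * Q).map Complex.ofReal = P.map Complex.ofReal * Q.map Complex.ofReal := by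
    intro P Q
    exact Matrix.map_mul (f := Complex.ofRealHom)
  have hMc : M.map Complex.ofReal = (2 : ℂ) • Sc := by
    ext i j
    simp [hM, Matrix.smul_apply, Matrix.map_apply, hSc]
  have hone : (R * M * R).map Complex.ofReal = 1 := by
    rw [hRMR]
    exact Matrix.map_one _ Complex.ofReal_zero Complex.ofReal_one
  have hRcH : Rcᴴ = Rc := by
    ext i j
    have hRe : R j i = R i j := by
      have := congrFun (congrFun hRsymm i) j
      simpa using this
    simp [hRc, Matrix.conjTranspose_apply, Matrix.map_apply, Complex.conj_ofReal, hRe]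
  set H := Complex.I • Kc with hH
  have hcong : (Rcᴴ * A * Rc).PosSemidef := hpsd.conjTranspose_mul_mul_same Rc
  have hAc : Rcᴴ * A * Rc = 1 - H := by
    rw [hRcH, hA]
    have expand : Rc * ((2 : ℂ) • Sc - Complex.I • Jc) * Rc
        = Rc * ((2 : ℂ) • Sc) * Rc - Complex.I • (Rc * Jc * Rc) := by
      simp [Matrix.mul_sub, Matrix.sub_mul, Matrix.mul_smul, Matrix.smul_mul]
    rw [expand, ← hMc]
    have e1 : Rc * M.map Complex.ofReal * Rc = 1 := by
      rw [hRc, ← hmap_mul, ← hmap_mul, hone]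
    have e2 : Rc * Jc * Rc = Kc := by
      rw [hRc, hJc, ← hmap_mul, ← hmap_mul, hKc, hK]
    rw [e1, e2, hH]
  have h1 : ((1 : Matrix (Fin n ⊕ Fin n) (Fin n ⊕ Fin n) ℂ) - H).PosSemidef := by
    rw [← hAc]; exact hcong
  have hKT : Kᵀ = -K := by
    rw [hK, transpose_mul, transpose_mul, hJT, hRsymm]
    simp [Matrix.mul_neg, Matrix.neg_mul, Matrix.mul_assoc]
  have hKcT : Kcᵀ = -Kc := by
    rw [hKc, ← Matrix.transpose_map, hKT]
    ext i j
    simp [Matrix.map_apply]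
  have hHT : ((1 : Matrix (Fin n ⊕ Fin n) (Fin n ⊕ Fin n) ℂ) - H)ᵀ = 1 + H := by
    rw [transpose_sub, transpose_one, hH, transpose_smul, hKcT]
    simp
  have h2 : ((1 : Matrix (Fin n ⊕ Fin n) (Fin n ⊕ Fin n) ℂ) + H).PosSemidef := by
    rw [← hHT]; exact h1.transpose
  have hHherm : H.IsHermitian := by
    have := (Matrix.isHermitian_one (n := Fin n ⊕ Fin n) (α := ℂ)).sub h1.isHermitian
    simpa using this
  have habs := abs_det_le_one_of_pm_one_posSemidef hHherm h1 h2
  -- compute |det H|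
  have hcard : Fintype.card (Fin n ⊕ Fin n) = 2 * n := by
    simp [Fintype.card_sum, Fintype.card_fin, two_mul]
  have hdetH : H.det = (-1 : ℂ) ^ n * (K.det : ℂ) := by
    rw [hH, det_smul, hcard, pow_mul, Complex.I_sq]
    congr 1
    rw [hKc]
    exact (RingHom.map_det Complex.ofRealHom K).symm
  have habsK : |K.det| ≤ 1 := by
    rw [hdetH] at habs
    simpa [_root_.map_mul, map_pow, Complex.norm_real] using habs
  have hKdet : K.det = R.det ^ 2 * J.det := by
    rw [hK, det_mul, det_mul]; ring
  have hJdet2 : J.det * J.det = 1 := by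
    have := congrArg Matrix.det hJJT
    rwa [det_mul, det_transpose, det_one] at this
  have hJdet : J.det = 1 ∨ J.det = -1 := mul_self_eq_one_iff.mp hJdet2
  have hr2le : R.det ^ 2 ≤ 1 := by
    have e : |K.det| = R.det ^ 2 := by
      rcases hJdet with h | h <;>
        simp [hKdet, h, abs_mul, abs_of_nonneg (sq_nonneg R.det)]
    rwa [e] at habsK
  have hMdet1 : M.det * R.det ^ 2 = 1 := by
    have h := congrArg Matrix.det hRMR
    rw [det_mul, det_mul, det_one] at h
    linear_combination h
  have hM1 : 1 ≤ M.det :=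
    le_of_le_of_eq (by nlinarith [mul_le_mul_of_nonneg_left hr2le (le_of_lt hdetM)]) rfl
  have hMdetS : M.det = 4 ^ n * S.det := by
    rw [hM, det_smul, hcard, pow_mul]
    norm_num
  have h4 : (0 : ℝ) < 4 ^ n := by positivity
  rw [inv_eq_one_div, div_le_iff₀ h4]
  rw [hMdetS] at hM1
  linarith [hM1, mul_comm (S.det) ((4:ℝ)^n)]
end
end

section
/- Uniqueness of symplectic eigenvalues: if D = diag(d₁,...,d_n) with d₁ ≥ ... ≥ d_n > 0 and D' = diag(d₁',...,d_n') with d₁' ≥ ... ≥ d_n' > 0, and there exist M, M' ∈ Sp(2n,ℝ) with Mᵀ[[D,0],[0,D]]M = M'ᵀ[[D',0],[0,D']]M', then D = D'. -/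
open Matrix
open scoped ComplexOrder

noncomputable section

namespace WilliamsonAux

open Polynomial

/-- If `P * A = B * P` with `det P ≠ 0`, then `A` and `B` have the same char. polynomial. -/
lemma charpoly_eq_of_mul_eq {R : Type*} [CommRing R] [IsDomain R] {m : Type*} [Fintype m]
    [DecidableEq m] (P A B : Matrix m m R) (hP : P.det ≠ 0) (hc : P * A = B * P) :
    A.charpoly = B.charpoly := by
  have key : P.map C * A.charmatrix = B.charmatrix * P.map C := by
    have h1 : (P * A).map (C : R →+* R[X]) = P.map C * A.map C := Matrix.map_mul
    have h2 : (B * P).map (C : R →+* R[X]) = B.map C * P.map C := Matrix.map_mul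
    have h3 : P.map C * Matrix.scalar m (X : R[X]) = Matrix.scalar m (X : R[X]) * P.map C :=
      (Matrix.scalar_commute (X : R[X]) (fun r => Commute.all _ r) (P.map C)).symm
    simp only [charmatrix, RingHom.mapMatrix_apply, mul_sub, sub_mul, h3]
    rw [← h1, ← h2, hc]
  have hdet := congrArg Matrix.det key
  rw [Matrix.det_mul, Matrix.det_mul] at hdet
  have hPC : (P.map (C : R →+* R[X])).det = C P.det := ((C : R →+* R[X]).map_det P).symm
  rw [hPC] at hdet
  have hC0 : (C P.det : R[X]) ≠ 0 := by simpa using hP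
  unfold Matrix.charpoly
  rw [mul_comm] at hdet
  exact mul_right_cancel₀ hC0 hdet

lemma charpoly_diagonal' {R : Type*} [CommRing R] {m : Type*} [Fintype m] [DecidableEq m]
    (v : m → R) :
    (Matrix.diagonal v).charpoly = ∏ i, (X - C (v i)) := by
  have : (Matrix.diagonal v).charmatrix = Matrix.diagonal (fun i => X - C (v i)) := by
    ext i j
    by_cases h : i = j
    · subst h; simp [charmatrix_apply_eq]
    · simp [charmatrix_apply_ne _ _ _ h, Matrix.diagonal_apply_ne _ h]
  rw [Matrix.charpoly, this, Matrix.det_diagonal]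

lemma sympJ_sq (n : ℕ) : sympJ n * sympJ n = -1 := by
  simp only [sympJ, Matrix.fromBlocks_multiply, Matrix.zero_mul, Matrix.mul_zero, add_zero,
    zero_add, Matrix.neg_mul, Matrix.one_mul, Matrix.mul_one, Matrix.mul_neg]
  rw [← Matrix.fromBlocks_one, Matrix.fromBlocks_neg]
  congr 1 <;> norm_num

lemma symp_left_inv {n : ℕ} (M : Matrix (Fin n ⊕ Fin n) (Fin n ⊕ Fin n) ℝ)
    (hM : IsSymplectic M) : (-(sympJ n) * Mᵀ * sympJ n) * M = 1 := by
  have e : (-(sympJ n) * Mᵀ * sympJ n) * M = -(sympJ n) * (Mᵀ * sympJ n * M) := by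
    simp only [Matrix.mul_assoc, Matrix.neg_mul]
  rw [e, hM, Matrix.neg_mul, sympJ_sq, neg_neg]

lemma symp_det_ne {n : ℕ} (M : Matrix (Fin n ⊕ Fin n) (Fin n ⊕ Fin n) ℝ)
    (hM : IsSymplectic M) : M.det ≠ 0 := by
  intro h0
  have := congrArg Matrix.det (symp_left_inv M hM)
  rw [Matrix.det_mul, h0, mul_zero, Matrix.det_one] at this
  exact zero_ne_one this

lemma symp_MJMT {n : ℕ} (M : Matrix (Fin n ⊕ Fin n) (Fin n ⊕ Fin n) ℝ)
    (hM : IsSymplectic M) : M * sympJ n * Mᵀ = sympJ n := by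
  have h2 : M * (-(sympJ n) * Mᵀ * sympJ n) = 1 := mul_eq_one_comm.mpr (by
    simpa only [Matrix.mul_assoc] using symp_left_inv M hM)
  have h3 := congrArg (· * (-(sympJ n))) h2
  simp only [Matrix.mul_assoc, Matrix.one_mul] at h3
  have h4 : sympJ n * -(sympJ n) = 1 := by rw [Matrix.mul_neg, sympJ_sq, neg_neg]
  rw [h4] at h3
  simp only [Matrix.mul_one, Matrix.neg_mul, Matrix.mul_neg] at h3
  have := neg_injective h3
  simpa only [Matrix.mul_assoc] using this

/-- The complex change-of-basis matrix diagonalizing J·D̃. -/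
noncomputable def Pc (n : ℕ) : Matrix (Fin n ⊕ Fin n) (Fin n ⊕ Fin n) ℂ :=
  Matrix.fromBlocks 1 1 ((-Complex.I) • 1) (Complex.I • 1)

noncomputable def Qc (n : ℕ) : Matrix (Fin n ⊕ Fin n) (Fin n ⊕ Fin n) ℂ :=
  Matrix.fromBlocks 1 (Complex.I • 1) 1 ((-Complex.I) • 1)

lemma QP (n : ℕ) : Qc n * Pc n = (2:ℂ) • 1 := by
  simp only [Qc, Pc, Matrix.fromBlocks_multiply, Matrix.smul_mul, Matrix.mul_smul,
    Matrix.one_mul, Matrix.mul_one, smul_smul]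
  rw [← Matrix.fromBlocks_one, Matrix.fromBlocks_smul]
  congr 1
  all_goals simp [Complex.I_mul_I]
  all_goals module

lemma detPc (n : ℕ) : (Pc n).det ≠ 0 := by
  intro h0
  have := congrArg Matrix.det (QP n)
  rw [Matrix.det_mul, h0, mul_zero, Matrix.det_smul, Matrix.det_one, mul_one] at this
  have h2 : ((2:ℂ) ^ Fintype.card (Fin n ⊕ Fin n)) ≠ 0 := pow_ne_zero _ two_ne_zero
  exact h2 this.symm

lemma EP_eq_PD {n : ℕ} (d : Fin n → ℝ) :
    Matrix.fromBlocks 0 (-(Matrix.diagonal fun k => (d k : ℂ)))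
        (Matrix.diagonal fun k => (d k : ℂ)) 0 * Pc n =
      Pc n *
        Matrix.diagonal (Sum.elim (fun k => Complex.I * d k) (fun k => -Complex.I * d k)) := by
  rw [← Matrix.fromBlocks_diagonal]
  simp only [Pc, Matrix.fromBlocks_multiply, Matrix.smul_mul, Matrix.mul_smul,
    Matrix.one_mul, Matrix.mul_one, Matrix.zero_mul, Matrix.mul_zero, add_zero, zero_add,
    Matrix.neg_mul, Matrix.mul_neg, neg_smul, neg_neg]
  ext i j
  rcases i with i | i <;> rcases j with j | j <;>
    by_cases h : i = j <;>
      simp [Matrix.diagonal_apply, h, Matrix.smul_apply, mul_comm, mul_left_comm, mul_assoc,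
        ← mul_assoc Complex.I Complex.I, Complex.I_mul_I]

/-- Roots of the charpoly of the diagonalized form. -/
lemma roots_charpoly_diag {n : ℕ} (d : Fin n → ℝ) :
    (Matrix.diagonal
        (Sum.elim (fun k => Complex.I * d k) (fun k => -Complex.I * (d k : ℂ)))).charpoly.roots =
      (Finset.univ.val.map fun k : Fin n => Complex.I * d k) +
        (Finset.univ.val.map fun k : Fin n => -Complex.I * (d k : ℂ)) := by
  rw [charpoly_diagonal']
  have key : (∏ i : Fin n ⊕ Fin n,
        (X - C (Sum.elim (fun k => Complex.I * d k) (fun k => -Complex.I * (d k : ℂ)) i))) =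
      (((Finset.univ.val.map fun k : Fin n => Complex.I * (d k : ℂ)) +
        (Finset.univ.val.map fun k : Fin n => -Complex.I * (d k : ℂ))).map
          fun a => X - C a).prod := by
    rw [Fintype.prod_sum_type]
    simp only [Sum.elim_inl, Sum.elim_inr, Multiset.map_add, Multiset.prod_add]
    rw [Finset.prod_eq_multiset_prod, Finset.prod_eq_multiset_prod, Multiset.map_map,
      Multiset.map_map]
    rfl
  rw [key, Polynomial.roots_multiset_prod_X_sub_C]

end WilliamsonAux

open WilliamsonAux Polynomial in
theorem williamson_uniqueness (n : ℕ)
    (d d' : Fin n → ℝ)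
    (hd : ∀ i j : Fin n, i ≤ j → d j ≤ d i) (hd0 : ∀ i, 0 < d i)
    (hd' : ∀ i j : Fin n, i ≤ j → d' j ≤ d' i) (hd'0 : ∀ i, 0 < d' i)
    (M M' : Matrix (Fin n ⊕ Fin n) (Fin n ⊕ Fin n) ℝ)
    (hM : IsSymplectic M) (hM' : IsSymplectic M')
    (h : Mᵀ * Matrix.fromBlocks (Matrix.diagonal d) 0 0 (Matrix.diagonal d) * M =
      M'ᵀ * Matrix.fromBlocks (Matrix.diagonal d') 0 0 (Matrix.diagonal d') * M') :
    d = d' := by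
  classical
  set J := sympJ n with hJ
  set Dt : Matrix (Fin n ⊕ Fin n) (Fin n ⊕ Fin n) ℝ :=
    Matrix.fromBlocks (Matrix.diagonal d) 0 0 (Matrix.diagonal d) with hDt
  set Dt' : Matrix (Fin n ⊕ Fin n) (Fin n ⊕ Fin n) ℝ :=
    Matrix.fromBlocks (Matrix.diagonal d') 0 0 (Matrix.diagonal d') with hDt'
  -- Step 1: charpoly (J * Dt) = charpoly (J * Dt')
  have sim : ∀ (N : Matrix (Fin n ⊕ Fin n) (Fin n ⊕ Fin n) ℝ) (hN : IsSymplectic N)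
      (E : Matrix (Fin n ⊕ Fin n) (Fin n ⊕ Fin n) ℝ),
      N * (J * (Nᵀ * E * N)) = (J * E) * N := by
    intro N hN E
    calc N * (J * (Nᵀ * E * N)) = (N * J * Nᵀ) * E * N := by
          simp only [Matrix.mul_assoc]
        _ = (J * E) * N := by rw [symp_MJMT N hN, Matrix.mul_assoc]
  have hcp : (J * Dt).charpoly = (J * Dt').charpoly := by
    have e1 : (J * (Mᵀ * Dt * M)).charpoly = (J * Dt).charpoly :=
      charpoly_eq_of_mul_eq M _ _ (symp_det_ne M hM) (sim M hM Dt)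
    have e2 : (J * (M'ᵀ * Dt' * M')).charpoly = (J * Dt').charpoly :=
      charpoly_eq_of_mul_eq M' _ _ (symp_det_ne M' hM') (sim M' hM' Dt')
    rw [← e1, ← e2, h]
  -- Step 2: pass to ℂ
  have hmap : (((J * Dt).map (Complex.ofReal : ℝ → ℂ))).charpoly =
      (((J * Dt').map (Complex.ofReal : ℝ → ℂ))).charpoly := by
    rw [show (Complex.ofReal : ℝ → ℂ) = ⇑Complex.ofRealHom from rfl, Matrix.charpoly_map,
      Matrix.charpoly_map, hcp]
  -- Step 3: compute the complex matrices as block forms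
  have hblock : ∀ e : Fin n → ℝ,
      ((J * Matrix.fromBlocks (Matrix.diagonal e) 0 0 (Matrix.diagonal e)).map
          (Complex.ofReal : ℝ → ℂ)) =
        Matrix.fromBlocks 0 (-(Matrix.diagonal fun k => (e k : ℂ)))
          (Matrix.diagonal fun k => (e k : ℂ)) 0 := by
    intro e
    have h1 : J * Matrix.fromBlocks (Matrix.diagonal e) 0 0 (Matrix.diagonal e) =
        Matrix.fromBlocks 0 (-(Matrix.diagonal e)) (Matrix.diagonal e) 0 := by
      simp only [hJ, sympJ, Matrix.fromBlocks_multiply, Matrix.zero_mul, Matrix.mul_zero,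
        Matrix.one_mul, Matrix.neg_mul, add_zero, zero_add]
    rw [h1]
    ext i j
    rcases i with i | i <;> rcases j with j | j <;> by_cases hij : i = j <;>
      simp [Matrix.diagonal_apply, hij]
  -- Step 4: similarity to diagonal over ℂ
  have hdiagcp : ∀ e : Fin n → ℝ,
      (Matrix.fromBlocks 0 (-(Matrix.diagonal fun k => (e k : ℂ)))
          (Matrix.diagonal fun k => (e k : ℂ)) 0).charpoly =
        (Matrix.diagonal
          (Sum.elim (fun k => Complex.I * e k) (fun k => -Complex.I * (e k : ℂ)))).charpoly := by
    intro e
    exact (charpoly_eq_of_mul_eq (Pc n) _ _ (detPc n) (EP_eq_PD e).symm).symm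
  -- Step 5: equality of root multisets
  have hroots :
      ((Finset.univ.val.map fun k : Fin n => Complex.I * d k) +
        (Finset.univ.val.map fun k : Fin n => -Complex.I * (d k : ℂ))) =
      ((Finset.univ.val.map fun k : Fin n => Complex.I * d' k) +
        (Finset.univ.val.map fun k : Fin n => -Complex.I * (d' k : ℂ))) := by
    rw [← roots_charpoly_diag d, ← roots_charpoly_diag d']
    rw [← hdiagcp d, ← hdiagcp d', ← hblock d, ← hblock d']
    rw [hmap]
  -- Step 6: filter out the roots with positive imaginary part
  have hfilter : ∀ e : Fin n → ℝ, (∀ k, 0 < e k) →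
      Multiset.filter (fun z : ℂ => 0 < z.im)
        ((Finset.univ.val.map fun k : Fin n => Complex.I * e k) +
          (Finset.univ.val.map fun k : Fin n => -Complex.I * (e k : ℂ))) =
        Finset.univ.val.map fun k : Fin n => Complex.I * e k := by
    intro e he
    rw [Multiset.filter_add]
    have f1 : Multiset.filter (fun z : ℂ => 0 < z.im)
        (Finset.univ.val.map fun k : Fin n => Complex.I * (e k : ℂ)) =
        Finset.univ.val.map fun k : Fin n => Complex.I * (e k : ℂ) := by
      apply Multiset.filter_eq_self.2
      intro z hz
      obtain ⟨k, _, rfl⟩ := Multiset.mem_map.mp hz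
      simpa [Complex.mul_im] using he k
    have f2 : Multiset.filter (fun z : ℂ => 0 < z.im)
        (Finset.univ.val.map fun k : Fin n => -Complex.I * (e k : ℂ)) = 0 := by
      apply Multiset.filter_eq_nil.2
      intro z hz
      obtain ⟨k, _, rfl⟩ := Multiset.mem_map.mp hz
      simp only [not_lt]
      simp [Complex.mul_im]
      exact (he k).le
    rw [f1, f2, add_zero]
  have hpos := congrArg (Multiset.filter (fun z : ℂ => 0 < z.im)) hroots
  rw [hfilter d hd0, hfilter d' hd'0] at hpos
  -- Step 7: strip the injective map r ↦ I * r
  have hinj : Function.Injective (fun r : ℝ => Complex.I * (r : ℂ)) := by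
    intro a b hab
    have := mul_left_cancel₀ Complex.I_ne_zero hab
    exact_mod_cast this
  have hmult : Finset.univ.val.map d = Finset.univ.val.map d' := by
    apply Multiset.map_injective hinj
    rw [Multiset.map_map, Multiset.map_map]
    exact hpos
  -- Step 8: sorted lists with the same multiset are equal
  have hperm : (List.ofFn d).Perm (List.ofFn d') := by
    rw [Fin.univ_val_map, Fin.univ_val_map] at hmult
    exact Multiset.coe_eq_coe.mp hmult
  haveI : IsAntisymm ℝ (· ≥ ·) := ⟨fun a b h1 h2 => le_antisymm h2 h1⟩
  have hs1 : List.Pairwise (· ≥ ·) (List.ofFn d) :=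
    List.pairwise_ofFn.2 fun i j hij => hd i j hij.le
  have hs2 : List.Pairwise (· ≥ ·) (List.ofFn d') :=
    List.pairwise_ofFn.2 fun i j hij => hd' i j hij.le
  exact List.ofFn_injective (List.Perm.eq_of_pairwise (fun _ _ _ _ h1 h2 => le_antisymm h2 h1) hs1 hs2 hperm)
end
end

section
/- Let D be an n×n real diagonal matrix with D ≥ I (all diagonal entries at least 1). Then there exist positive diagonal matrices D₁, D₂ of order n such that D = ½(D₁ + D₂) and D = ½(D₁⁻¹ + D₂⁻¹). -/
open Matrix
open scoped ComplexOrder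

noncomputable section

theorem diagonal_splitting (n : ℕ) (d : Fin n → ℝ) (hd : ∀ i, 1 ≤ d i) :
    ∃ d₁ d₂ : Fin n → ℝ, (∀ i, 0 < d₁ i) ∧ (∀ i, 0 < d₂ i) ∧
      Matrix.diagonal d =
        (1 / 2 : ℝ) • (Matrix.diagonal d₁ + Matrix.diagonal d₂) ∧
      Matrix.diagonal d =
        (1 / 2 : ℝ) • ((Matrix.diagonal d₁)⁻¹ + (Matrix.diagonal d₂)⁻¹) := by
  refine ⟨fun i => d i + Real.sqrt (d i ^ 2 - 1),
          fun i => d i - Real.sqrt (d i ^ 2 - 1), ?_, ?_, ?_, ?_⟩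
  · intro i
    have h1 := hd i
    have h2 : (0:ℝ) ≤ Real.sqrt (d i ^ 2 - 1) := Real.sqrt_nonneg _
    simp only []
    linarith
  · intro i
    have h1 := hd i
    have hs : Real.sqrt (d i ^ 2 - 1) < d i := by
      have : Real.sqrt (d i ^ 2 - 1) < Real.sqrt (d i ^ 2) :=
        Real.sqrt_lt_sqrt (by nlinarith) (by linarith)
      rwa [Real.sqrt_sq (by linarith)] at this
    simp only []
    linarith
  · ext i j
    rcases eq_or_ne i j with rfl | h
    · simp [Matrix.diagonal_apply_eq]
      ring
    · simp [Matrix.diagonal_apply_ne _ h]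
  · have key : ∀ e : Fin n → ℝ, (∀ i, e i ≠ 0) →
        (Matrix.diagonal e)⁻¹ = Matrix.diagonal (fun i => (e i)⁻¹) := by
      intro e he
      apply Matrix.inv_eq_right_inv
      rw [Matrix.diagonal_mul_diagonal]
      convert Matrix.diagonal_one using 2
      funext i
      exact mul_inv_cancel₀ (he i)
    have hne1 : ∀ i, d i + Real.sqrt (d i ^ 2 - 1) ≠ 0 := by
      intro i
      have := hd i
      have := Real.sqrt_nonneg (d i ^ 2 - 1)
      positivity
    have hne2 : ∀ i, d i - Real.sqrt (d i ^ 2 - 1) ≠ 0 := by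
      intro i
      have h1 := hd i
      have : Real.sqrt (d i ^ 2 - 1) < Real.sqrt (d i ^ 2) :=
        Real.sqrt_lt_sqrt (by nlinarith) (by linarith)
      rw [Real.sqrt_sq (by linarith)] at this
      intro h; linarith [sub_eq_zero.mp h]
    rw [key _ hne1, key _ hne2]
    ext i j
    rcases eq_or_ne i j with rfl | h
    · have h1 := hd i
      have hsq : Real.sqrt (d i ^ 2 - 1) ^ 2 = d i ^ 2 - 1 :=
        Real.sq_sqrt (by nlinarith)
      have hs : Real.sqrt (d i ^ 2 - 1) < d i := by
        have : Real.sqrt (d i ^ 2 - 1) < Real.sqrt (d i ^ 2) :=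
          Real.sqrt_lt_sqrt (by nlinarith) (by linarith)
        rwa [Real.sqrt_sq (by linarith)] at this
      have hp1 : (0:ℝ) < d i + Real.sqrt (d i ^ 2 - 1) := by
        have := Real.sqrt_nonneg (d i ^ 2 - 1); linarith
      have hp2 : (0:ℝ) < d i - Real.sqrt (d i ^ 2 - 1) := by linarith
      simp only [Matrix.diagonal_apply_eq, Matrix.smul_apply, Matrix.add_apply, Pi.smul_apply, Pi.add_apply, smul_eq_mul]
      field_simp
      nlinarith [hsq]
    · simp [Matrix.diagonal_apply_ne _ h]
end
end

section
/- For real numbers d ≥ 1, setting x = 1 + 2(d²-1) + 2d√(d²-1), d₁ = 2d/(1+x), and d₂ = d₁x, one has d₁ > 0, d₂ > 0, d = ½(d₁+d₂), and d = ½(d₁⁻¹ + d₂⁻¹). -/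
theorem scalar_splitting (d x d₁ d₂ : ℝ) (hd : 1 ≤ d)
    (hx : x = 1 + 2 * (d ^ 2 - 1) + 2 * d * Real.sqrt (d ^ 2 - 1))
    (h1 : d₁ = 2 * d / (1 + x)) (h2 : d₂ = d₁ * x) :
    0 < d₁ ∧ 0 < d₂ ∧ d = (d₁ + d₂) / 2 ∧ d = (d₁⁻¹ + d₂⁻¹) / 2 := by
  set s := Real.sqrt (d ^ 2 - 1) with hs
  have hs0 : 0 ≤ s := Real.sqrt_nonneg _
  have hs2 : s ^ 2 = d ^ 2 - 1 := Real.sq_sqrt (by nlinarith)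
  have hds : 1 ≤ d + s := by linarith
  have hds0 : 0 < d + s := by linarith
  have hxval : x = (d + s) ^ 2 := by rw [hx]; ring_nf; nlinarith
  have h1x : 1 + x = 2 * d * (d + s) := by rw [hxval]; nlinarith
  have hd1 : d₁ = 1 / (d + s) := by
    rw [h1, h1x]
    field_simp
  have hd2 : d₂ = d + s := by
    rw [h2, hd1, hxval]
    field_simp
  have hd1pos : 0 < d₁ := by rw [hd1]; positivity
  refine ⟨hd1pos, by rw [hd2]; exact hds0, ?_, ?_⟩
  · rw [hd1, hd2]; field_simp; nlinarith
  · rw [hd1, hd2]; rw [one_div, inv_inv]; field_simp; nlinarith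
end

section
/- A real positive definite matrix S of order 2n belongs to K_n = {S symmetric : 2S - iJ ≥ 0} if and only if there exist symplectic matrices L, M ∈ Sp(2n,ℝ) such that S = ¼(LᵀL + MᵀM). -/
open Matrix
open scoped ComplexOrder

noncomputable section

namespace GaussianAux

variable {n : ℕ}

/-- complexification of a real matrix -/
def cmap {m k : Type*} (A : Matrix m k ℝ) : Matrix m k ℂ := A.map Complex.ofReal

lemma cmap_mul {m k l : Type*} [Fintype k] (A : Matrix m k ℝ) (B : Matrix k l ℝ) :
    cmap (A * B) = cmap A * cmap B := by
  ext i j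
  simp [cmap, Matrix.mul_apply]

lemma cmap_add {m k : Type*} (A B : Matrix m k ℝ) : cmap (A + B) = cmap A + cmap B := by
  ext i j; simp [cmap]

lemma cmap_transpose {m k : Type*} (A : Matrix m k ℝ) : cmap Aᵀ = (cmap A)ᵀ := by
  ext i j; simp [cmap]

lemma cmap_conjTranspose {m k : Type*} (A : Matrix m k ℝ) : (cmap A)ᴴ = cmap Aᵀ := by
  ext i j; simp [cmap, conjTranspose_apply, Complex.conj_ofReal]

lemma cmap_smul {m k : Type*} (c : ℝ) (A : Matrix m k ℝ) :
    cmap (c • A) = (c : ℂ) • cmap A := by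
  ext i j; simp [cmap]

lemma cmap_neg {m k : Type*} (A : Matrix m k ℝ) : cmap (-A) = -cmap A := by
  ext i j; simp [cmap]

lemma cmap_one {m : Type*} [Fintype m] [DecidableEq m] :
    cmap (1 : Matrix m m ℝ) = 1 := by
  ext i j
  by_cases h : i = j <;> simp [cmap, Matrix.one_apply, h]

lemma sympJ_transpose : (sympJ n)ᵀ = -sympJ n := by
  simp [sympJ, fromBlocks_transpose, fromBlocks_neg]

lemma sympJ_mul_self : sympJ n * sympJ n = -1 := by
  simp [sympJ, fromBlocks_multiply, ← fromBlocks_one, fromBlocks_neg]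

lemma isSymplectic_mul {L M : Matrix (Fin n ⊕ Fin n) (Fin n ⊕ Fin n) ℝ}
    (hL : IsSymplectic L) (hM : IsSymplectic M) : IsSymplectic (L * M) := by
  unfold IsSymplectic at *
  rw [transpose_mul]
  calc Mᵀ * Lᵀ * (sympJ n) * (L * M) = Mᵀ * (Lᵀ * sympJ n * L) * M := by
        simp only [Matrix.mul_assoc]
    _ = sympJ n := by rw [hL, hM]

/-- smul of a psd matrix by a nonneg real is psd -/
lemma posSemidef_smul {m : Type*} [Fintype m] {A : Matrix m m ℂ} (hA : A.PosSemidef)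
    {c : ℝ} (hc : 0 ≤ c) : ((c : ℂ) • A).PosSemidef := by
  refine Matrix.PosSemidef.of_dotProduct_mulVec_nonneg ?_ ?_
  · unfold Matrix.IsHermitian
    rw [conjTranspose_smul, hA.1.eq]
    congr 1
    simp [Complex.conj_ofReal]
  · intro x
    rw [smul_mulVec, dotProduct_smul, smul_eq_mul]
    have h0 := hA.dotProduct_mulVec_nonneg x
    rw [Complex.le_def] at h0 ⊢
    constructor
    · simp only [Complex.mul_re, Complex.ofReal_re, Complex.ofReal_im, Complex.zero_re] at h0 ⊢
      nlinarith [h0.1, h0.2]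
    · simp only [Complex.mul_im, Complex.ofReal_re, Complex.ofReal_im, Complex.zero_im] at h0 ⊢
      nlinarith [h0.1, h0.2]

/-- For symplectic L, the matrix (Lᵀ(1 - iJ)L = LᵀL - iJ is psd. -/
lemma psd_one_sub_iJ : ((1 : Matrix (Fin n ⊕ Fin n) (Fin n ⊕ Fin n) ℂ)
    - Complex.I • cmap (sympJ n)).PosSemidef := by
  set N := (1 : Matrix (Fin n ⊕ Fin n) (Fin n ⊕ Fin n) ℂ) - Complex.I • cmap (sympJ n) with hN
  have hherm : Nᴴ = N := by
    rw [hN, conjTranspose_sub, conjTranspose_one, conjTranspose_smul, cmap_conjTranspose,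
      sympJ_transpose, cmap_neg]
    simp [Complex.conj_I]
  have hsq : N * N = (2 : ℂ) • N := by
    have hJ2 : cmap (sympJ n) * cmap (sympJ n) = -1 := by
      rw [← cmap_mul, sympJ_mul_self, ← cmap_one, cmap_neg]
    rw [hN]
    rw [sub_mul, mul_sub, mul_sub, one_mul, mul_one, smul_mul_smul_comm, hJ2]
    rw [Complex.I_mul_I]
    simp [smul_smul, two_smul]
    abel
  have : N = (1/2 : ℂ) • (Nᴴ * N) := by
    rw [hherm, hsq]
    rw [smul_smul]
    norm_num
  rw [this]
  have : ((1:ℝ)/2 : ℂ) • (Nᴴ * N) = (((1:ℝ)/2 : ℝ) : ℂ) • (Nᴴ * N) := by norm_num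
  have h2 := posSemidef_smul (Matrix.posSemidef_conjTranspose_mul_self N) (by norm_num : (0:ℝ) ≤ 1/2)
  convert h2 using 2
  norm_num

lemma psd_symplectic_part {L : Matrix (Fin n ⊕ Fin n) (Fin n ⊕ Fin n) ℝ}
    (hL : IsSymplectic L) :
    (cmap (Lᵀ * L) - Complex.I • cmap (sympJ n)).PosSemidef := by
  have key : cmap (Lᵀ * L) - Complex.I • cmap (sympJ n)
      = (cmap L)ᴴ * ((1 : Matrix (Fin n ⊕ Fin n) (Fin n ⊕ Fin n) ℂ)
          - Complex.I • cmap (sympJ n)) * cmap L := by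
    rw [mul_sub, sub_mul, mul_one]
    have h1 : (cmap L)ᴴ * cmap L = cmap (Lᵀ * L) := by
      rw [cmap_conjTranspose, cmap_mul]
    have h2 : (cmap L)ᴴ * (Complex.I • cmap (sympJ n)) * cmap L
        = Complex.I • cmap (sympJ n) := by
      rw [Matrix.mul_smul, Matrix.smul_mul]
      congr 1
      rw [cmap_conjTranspose, ← cmap_mul, ← cmap_mul]
      exact congrArg cmap hL
    rw [h1, h2]
  rw [key]
  exact (psd_one_sub_iJ).conjTranspose_mul_mul_same (cmap L)

/-- The easy direction. -/
lemma easy_direction {S : Matrix (Fin n ⊕ Fin n) (Fin n ⊕ Fin n) ℝ}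
    {L M : Matrix (Fin n ⊕ Fin n) (Fin n ⊕ Fin n) ℝ}
    (hL : IsSymplectic L) (hM : IsSymplectic M)
    (hSd : S = (1 / 4 : ℝ) • (Lᵀ * L + Mᵀ * M)) : S ∈ Kset n := by
  constructor
  · -- symmetric
    unfold Matrix.IsSymm
    rw [hSd, transpose_smul, transpose_add, transpose_mul, transpose_mul, transpose_transpose,
      transpose_transpose]
  · have hexp : (2 : ℂ) • S.map (Complex.ofReal) - Complex.I • (sympJ n).map (Complex.ofReal)
        = (((1:ℝ)/2 : ℝ) : ℂ) • ((cmap (Lᵀ * L) - Complex.I • cmap (sympJ n))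
          + (cmap (Mᵀ * M) - Complex.I • cmap (sympJ n))) := by
      rw [hSd]
      ext i j
      simp only [cmap, Matrix.map_apply, Matrix.smul_apply, Matrix.sub_apply,
        Matrix.add_apply, smul_eq_mul, Complex.ofReal_mul, Complex.ofReal_add]
      push_cast
      ring
    rw [hexp]
    exact posSemidef_smul ((psd_symplectic_part hL).add (psd_symplectic_part hM)) (by norm_num)


section Helpers

variable {ι : Type*} [Fintype ι] [DecidableEq ι]

/-- eigenvectors of a Hermitian matrix for distinct real eigenvalues are orthogonal -/
lemma herm_orth {A : Matrix ι ι ℂ} (hA : A.IsHermitian) {v w : ι → ℂ} {μ ν : ℝ}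
    (hv : A *ᵥ v = (μ : ℂ) • v) (hw : A *ᵥ w = (ν : ℂ) • w) (hne : μ ≠ ν) :
    star v ⬝ᵥ w = 0 := by
  have h1 : star v ⬝ᵥ (A *ᵥ w) = (ν : ℂ) * (star v ⬝ᵥ w) := by
    rw [hw, dotProduct_smul, smul_eq_mul]
  have hsv : star v ᵥ* A = (μ : ℂ) • star v := by
    have := congrArg star hv
    rw [star_mulVec, hA.eq, star_smul] at this
    simpa [Complex.conj_ofReal] using this
  have h2 : star v ⬝ᵥ (A *ᵥ w) = (μ : ℂ) * (star v ⬝ᵥ w) := by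
    rw [dotProduct_mulVec, hsv, smul_dotProduct, smul_eq_mul]
  have h3 : ((μ : ℂ) - ν) * (star v ⬝ᵥ w) = 0 := by
    rw [sub_mul, ← h1, ← h2, sub_self]
  rcases mul_eq_zero.mp h3 with h | h
  · exfalso
    apply hne
    have : (μ : ℂ) = ν := by linear_combination h
    exact_mod_cast this
  · exact h

/-- if the columns of U at indices in T are orthonormal and furthermore "self-orthogonal
without conjugation", then 2 * T.card ≤ card ι. -/
lemma card_bound (U : Matrix ι ι ℂ) (hU : star U * U = 1) (T : Finset ι)
    (hcross : ∀ j ∈ T, ∀ k ∈ T, ∑ i, U i j * U i k = 0) :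
    2 * T.card ≤ Fintype.card ι := by
  classical
  set B : Matrix ι (↥T ⊕ ↥T) ℂ :=
    Matrix.of (fun i q => Sum.elim (fun (j : ↥T) => U i (j : ι))
      (fun (j : ↥T) => (starRingEnd ℂ) (U i (j : ι))) q) with hB
  have hUcol : ∀ j k : ι, ∑ i, (starRingEnd ℂ) (U i j) * U i k = if j = k then 1 else 0 := by
    intro j k
    have := congrFun (congrFun hU j) k
    simpa [Matrix.mul_apply, Matrix.star_apply, Matrix.one_apply] using this
  have hBB : Bᴴ * B = 1 := by
    ext q r
    rcases q with j | j <;> rcases r with k | k <;>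
      simp only [Matrix.mul_apply, Matrix.conjTranspose_apply, hB, Matrix.of_apply,
        Sum.elim_inl, Sum.elim_inr, Matrix.one_apply, Complex.star_def]
    · rw [hUcol]
      simp [Sum.inl.injEq]
    · have : ∑ i, (starRingEnd ℂ) (U i (j:ι)) * (starRingEnd ℂ) (U i (k:ι))
          = (starRingEnd ℂ) (∑ i, U i (j:ι) * U i (k:ι)) := by
        rw [map_sum]
        simp
      rw [this, hcross _ j.2 _ k.2]
      simp
    · have : ∑ i, (starRingEnd ℂ) ((starRingEnd ℂ) (U i (j:ι))) * U i (k:ι)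
          = ∑ i, U i (j:ι) * U i (k:ι) := by
        simp
      rw [this, hcross _ j.2 _ k.2]
      simp
    · have : ∑ i, (starRingEnd ℂ) ((starRingEnd ℂ) (U i (j:ι))) * (starRingEnd ℂ) (U i (k:ι))
          = (starRingEnd ℂ) (∑ i, (starRingEnd ℂ) (U i (j:ι)) * U i (k:ι)) := by
        rw [map_sum]
        simp [mul_comm]
      rw [this, hUcol]
      by_cases h : j = k <;> simp [h, Subtype.ext_iff]
  have h1 : Fintype.card (↥T ⊕ ↥T) = (1 : Matrix (↥T ⊕ ↥T) (↥T ⊕ ↥T) ℂ).rank :=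
    (Matrix.rank_one).symm
  have h2 : (1 : Matrix (↥T ⊕ ↥T) (↥T ⊕ ↥T) ℂ).rank ≤ B.rank := by
    rw [← hBB]
    exact Matrix.rank_mul_le_right _ _
  have h3 : B.rank ≤ Fintype.card ι := Matrix.rank_le_card_height B
  have := (h1.le.trans h2).trans h3
  simpa [Fintype.card_sum, Fintype.card_coe, two_mul] using this

end Helpers

variable {n : ℕ} in
lemma isSymplectic_of_mul_J_mul_transpose {L Linv : Matrix (Fin n ⊕ Fin n) (Fin n ⊕ Fin n) ℝ}
    (h1 : L * sympJ n * Lᵀ = sympJ n) (h2 : L * Linv = 1) (h3 : Linv * L = 1) :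
    IsSymplectic L := by
  have hLJ : L * sympJ n = sympJ n * Linvᵀ := by
    have : L * sympJ n * (Lᵀ * Linvᵀ) = sympJ n * Linvᵀ := by
      rw [← Matrix.mul_assoc, h1]
    rwa [← transpose_mul, h3, transpose_one, Matrix.mul_one] at this
  have hJL : sympJ n * L = Linvᵀ * sympJ n := by
    have step : sympJ n * L * sympJ n = - Linvᵀ := by
      calc sympJ n * L * sympJ n = sympJ n * (L * sympJ n) := by rw [Matrix.mul_assoc]
        _ = sympJ n * (sympJ n * Linvᵀ) := by rw [hLJ]
        _ = (sympJ n * sympJ n) * Linvᵀ := by rw [Matrix.mul_assoc]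
        _ = - Linvᵀ := by rw [sympJ_mul_self]; simp
    have := congrArg (· * sympJ n) step
    try simp only at this
    rw [Matrix.mul_assoc, sympJ_mul_self] at this
    have h4 : sympJ n * L * (-1) = -(sympJ n * L) := by simp
    rw [h4] at this
    have h5 : sympJ n * L = -(-Linvᵀ * sympJ n) := by
      rw [← this]; simp
    rw [h5]
    simp [Matrix.neg_mul]
  unfold IsSymplectic
  rw [Matrix.mul_assoc, hJL, ← Matrix.mul_assoc, ← transpose_mul, h3, transpose_one, Matrix.one_mul]


lemma sympJ_det_ne_zero {n : ℕ} : (sympJ n).det ≠ 0 := by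
  have hdetJ : (sympJ n).det * (sympJ n).det = 1 := by
    have h := congrArg Matrix.det (sympJ_mul_self (n := n))
    rw [det_mul] at h
    rw [h, show (-1 : Matrix (Fin n ⊕ Fin n) (Fin n ⊕ Fin n) ℝ) = -(1 : Matrix _ _ ℝ) by simp,
      det_neg, det_one, mul_one, Fintype.card_sum, Fintype.card_fin]
    exact Even.neg_one_pow ⟨n, rfl⟩
  intro h
  rw [h, mul_zero] at hdetJ
  exact zero_ne_one hdetJ

lemma conj_eigen {ι : Type*} [Fintype ι] {H : Matrix ι ι ℂ} (hherm : H.IsHermitian)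
    (ht : Hᵀ = -H) {v : ι → ℂ} {μ : ℝ} (h : H *ᵥ v = (μ : ℂ) • v) :
    H *ᵥ star v = ((-μ : ℝ) : ℂ) • star v := by
  have h1 : H *ᵥ star v = star v ᵥ* Hᵀ := (Matrix.vecMul_transpose _ _).symm
  rw [ht, Matrix.vecMul_neg] at h1
  have h2 : star v ᵥ* H = star (H *ᵥ v) := by rw [Matrix.star_mulVec, hherm.eq]
  rw [h2, h, star_smul] at h1
  rw [h1]
  simp [Complex.conj_ofReal]

variable {n : ℕ}

lemma williamson (S : Matrix (Fin n ⊕ Fin n) (Fin n ⊕ Fin n) ℝ) (hS : S.PosDef) :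
    ∃ (L : Matrix (Fin n ⊕ Fin n) (Fin n ⊕ Fin n) ℝ) (μ : Fin n → ℝ),
      (∀ j, 0 < μ j) ∧ IsSymplectic L ∧
      S = Lᵀ * fromBlocks (diagonal μ) 0 0 (diagonal μ) * L := by
  classical
  -- the square root of S
  obtain ⟨W, hWt, hW⟩ : ∃ W : Matrix (Fin n ⊕ Fin n) (Fin n ⊕ Fin n) ℝ, Wᵀ = W ∧ W * W = S := by
    open scoped MatrixOrder in
    refine ⟨CFC.sqrt S, ?_, CFC.sqrt_mul_sqrt_self S hS.posSemidef.nonneg⟩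
    open scoped MatrixOrder in
    have h := (CFC.sqrt_nonneg S).posSemidef.1
    have h2 : (CFC.sqrt S)ᴴ = (CFC.sqrt S)ᵀ := by
      ext i j; simp [conjTranspose_apply]
    rw [← h2]; exact h
  have hdetW : W.det * W.det = S.det := by rw [← det_mul, hW]
  have hdW : W.det ≠ 0 := by
    intro h
    have := hS.det_pos
    rw [← hdetW, h, mul_zero] at this
    exact lt_irrefl _ this
  have hWu : IsUnit W.det := isUnit_iff_ne_zero.mpr hdW
  have hWiW : W * W⁻¹ = 1 := Matrix.mul_nonsing_inv _ hWu
  have hWWi : W⁻¹ * W = 1 := Matrix.nonsing_inv_mul _ hWu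
  -- the antisymmetric matrix K = W J W
  set K := W * sympJ n * W with hKdef
  have hKt : Kᵀ = -K := by
    rw [hKdef, transpose_mul, transpose_mul, hWt, sympJ_transpose]
    rw [Matrix.neg_mul, Matrix.mul_neg, Matrix.mul_assoc]
  -- the Hermitian matrix i K
  set Hc := Complex.I • cmap K with hHcdef
  have hHt : Hcᵀ = -Hc := by
    rw [hHcdef, transpose_smul, ← cmap_transpose, hKt, cmap_neg]
    simp
  clear_value K Hc
  have hKanti : ∀ i j, K i j = - K j i := by
    intro i j
    have := congrFun (congrFun hKt j) i
    simpa [Matrix.transpose_apply] using this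
  have hHerm : Hc.IsHermitian := by
    unfold Matrix.IsHermitian
    ext i j
    rw [hHcdef]
    simp only [conjTranspose_apply, Matrix.smul_apply, cmap, Matrix.map_apply,
      smul_eq_mul, star_mul', Complex.star_def, Complex.conj_I, Complex.conj_ofReal]
    rw [hKanti j i]
    push_cast
    ring
  -- spectral data for Hc
  obtain ⟨U, eig, hUu, hUU', hHU, hdetprod⟩ :
      ∃ (U : Matrix (Fin n ⊕ Fin n) (Fin n ⊕ Fin n) ℂ) (eig : (Fin n ⊕ Fin n) → ℝ),
        star U * U = 1 ∧ U * star U = 1 ∧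
        Hc * U = U * diagonal (fun q => (eig q : ℂ)) ∧
        Hc.det = ∏ q, (eig q : ℂ) := by
    refine ⟨(Matrix.IsHermitian.eigenvectorUnitary hHerm :
        Matrix (Fin n ⊕ Fin n) (Fin n ⊕ Fin n) ℂ), hHerm.eigenvalues,
      Matrix.mem_unitaryGroup_iff'.mp (Matrix.IsHermitian.eigenvectorUnitary hHerm).2,
      Matrix.mem_unitaryGroup_iff.mp (Matrix.IsHermitian.eigenvectorUnitary hHerm).2,
      ?_, hHerm.det_eq_prod_eigenvalues⟩
    have hspec := hHerm.spectral_theorem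
    rw [Unitary.conjStarAlgAut_apply] at hspec
    calc Hc * (Matrix.IsHermitian.eigenvectorUnitary hHerm :
          Matrix (Fin n ⊕ Fin n) (Fin n ⊕ Fin n) ℂ)
        = (Matrix.IsHermitian.eigenvectorUnitary hHerm :
            Matrix (Fin n ⊕ Fin n) (Fin n ⊕ Fin n) ℂ) * diagonal (RCLike.ofReal ∘ hHerm.eigenvalues)
          * (star (Matrix.IsHermitian.eigenvectorUnitary hHerm :
              Matrix (Fin n ⊕ Fin n) (Fin n ⊕ Fin n) ℂ)
            * (Matrix.IsHermitian.eigenvectorUnitary hHerm :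
              Matrix (Fin n ⊕ Fin n) (Fin n ⊕ Fin n) ℂ)) := by
          rw [← Matrix.mul_assoc, ← hspec]
      _ = _ := by
          rw [Matrix.mem_unitaryGroup_iff'.mp (Matrix.IsHermitian.eigenvectorUnitary hHerm).2,
            Matrix.mul_one]
          rfl
  have hcol : ∀ q, Hc *ᵥ (fun i => U i q) = ((eig q : ℝ) : ℂ) • (fun i => U i q) := by
    intro q
    funext i
    have h := congrFun (congrFun hHU i) q
    rw [Matrix.mul_apply, Matrix.mul_diagonal] at h
    simp only [Matrix.mulVec, dotProduct, Pi.smul_apply, smul_eq_mul]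
    rw [h, mul_comm]
  -- eigenvalues are nonzero
  have hdetJ : (sympJ n).det * (sympJ n).det = 1 := by
    have := congrArg Matrix.det (sympJ_mul_self (n := n))
    rw [det_mul] at this
    rw [this]
    rw [show (-1 : Matrix (Fin n ⊕ Fin n) (Fin n ⊕ Fin n) ℝ) = -(1 : Matrix _ _ ℝ) by simp,
      det_neg, det_one, mul_one]
    rw [Fintype.card_sum, Fintype.card_fin]
    exact Even.neg_one_pow ⟨n, rfl⟩
  have hdJ : (sympJ n).det ≠ 0 := by
    intro h
    rw [h, mul_zero] at hdetJ
    exact zero_ne_one hdetJ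
  have hdetK : K.det ≠ 0 := by
    rw [hKdef, det_mul, det_mul]
    exact mul_ne_zero (mul_ne_zero hdW hdJ) hdW
  have hdetHc : Hc.det ≠ 0 := by
    rw [hHcdef, det_smul]
    apply mul_ne_zero
    · exact pow_ne_zero _ Complex.I_ne_zero
    · have h0 : cmap K = (Complex.ofRealHom : ℝ →+* ℂ).mapMatrix K := rfl
      rw [h0, ← RingHom.map_det]
      simpa using hdetK
  have heignz : ∀ q, eig q ≠ 0 := by
    intro q hq
    apply hdetHc
    rw [hdetprod]
    apply Finset.prod_eq_zero (Finset.mem_univ q)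
    rw [hq]
    simp
  -- orthogonality of columns against conjugated columns
  have hcross_gen : ∀ j k, eig j + eig k ≠ 0 → ∑ i, U i j * U i k = 0 := by
    intro j k hjk
    have hv := hcol j
    have hw := hcol k
    have hv' := conj_eigen hHerm hHt hv
    have horth := herm_orth hHerm hv' hw (by
      intro h
      apply hjk
      linarith)
    have : star (star fun i => U i j) = fun i => U i j := by simp
    rw [this] at horth
    simpa [dotProduct] using horth
  -- counting positive eigenvalues
  set P := Finset.filter (fun q => 0 < eig q) Finset.univ with hPdef
  set N := Finset.filter (fun q => eig q < 0) Finset.univ with hNdef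
  have hP2 : 2 * P.card ≤ n + n := by
    have := card_bound U hUu P (fun j hj k hk => hcross_gen j k (by
      rw [hPdef, Finset.mem_filter] at hj hk
      intro h
      linarith [hj.2, hk.2]))
    simpa [Fintype.card_sum, Fintype.card_fin] using this
  have hN2 : 2 * N.card ≤ n + n := by
    have := card_bound U hUu N (fun j hj k hk => hcross_gen j k (by
      rw [hNdef, Finset.mem_filter] at hj hk
      intro h
      linarith [hj.2, hk.2]))
    simpa [Fintype.card_sum, Fintype.card_fin] using this
  have hPN : P.card + N.card = n + n := by
    have hNeq : N = Finset.filter (fun q => ¬ 0 < eig q) Finset.univ := by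
      ext q
      simp only [hNdef, Finset.mem_filter, Finset.mem_univ, true_and]
      constructor
      · intro h; linarith
      · intro h
        rcases (heignz q).lt_or_gt with h' | h'
        · exact h'
        · exact absurd h' h
    rw [hNeq, hPdef]
    rw [Finset.card_filter_add_card_filter_not]
    simp [Fintype.card_sum, Fintype.card_fin]
  have hPcard : P.card = n := by omega
  have hPcard' : Fintype.card {x // x ∈ P} = n := by rw [Fintype.card_coe]; exact hPcard
  set e := (Fintype.equivFinOfCardEq hPcard').symm with hedef
  set idx : Fin n → (Fin n ⊕ Fin n) := fun j => ((e j) : Fin n ⊕ Fin n) with hidxdef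
  have hidx_mem : ∀ j, 0 < eig (idx j) := by
    intro j
    have h0 := (e j).2
    exact (Finset.mem_filter.mp h0).2
  have hidx_inj : Function.Injective idx := by
    intro a b hab
    exact e.injective (Subtype.ext hab)
  set μ : Fin n → ℝ := fun j => eig (idx j) with hmudef
  have hμ : ∀ j, 0 < μ j := hidx_mem
  set v : Fin n → (Fin n ⊕ Fin n) → ℂ := fun j => (fun i => U i (idx j)) with hvdef
  have hon : ∀ j k, ∑ i, (starRingEnd ℂ) (v j i) * v k i = if j = k then 1 else 0 := by
    intro j k
    have h0 := congrFun (congrFun hUu (idx j)) (idx k)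
    rw [Matrix.mul_apply] at h0
    simp only [Matrix.star_apply, Complex.star_def, Matrix.one_apply] at h0
    rw [hvdef]
    simp only []
    rw [h0]
    by_cases h : j = k
    · simp [h]
    · rw [if_neg (fun hc => h (hidx_inj hc)), if_neg h]
  have hcrossv : ∀ j k, ∑ i, v j i * v k i = 0 := by
    intro j k
    exact hcross_gen _ _ (by have h1 := hidx_mem j; have h2 := hidx_mem k; intro h; linarith)
  have hKv : ∀ j, cmap K *ᵥ v j = (-(Complex.I * (μ j : ℂ))) • v j := by
    intro j
    have h1 : Complex.I • (cmap K *ᵥ v j) = ((μ j : ℝ) : ℂ) • v j := by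
      rw [← smul_mulVec, ← hHcdef]
      exact hcol (idx j)
    calc cmap K *ᵥ v j = (-Complex.I) • (Complex.I • (cmap K *ᵥ v j)) := by
          rw [smul_smul]
          have : -Complex.I * Complex.I = 1 := by
            rw [neg_mul, Complex.I_mul_I, neg_neg]
          rw [this, one_smul]
      _ = (-Complex.I) • (((μ j : ℝ) : ℂ) • v j) := by rw [h1]
      _ = _ := by rw [smul_smul]; ring_nf
  have hKre : ∀ j i, ∑ k, K i k * (v j k).re = μ j * (v j i).im := by
    intro j i
    have h := congrFun (hKv j) i
    simp only [Matrix.mulVec, dotProduct, Pi.smul_apply, smul_eq_mul, cmap,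
      Matrix.map_apply] at h
    have hre := congrArg Complex.re h
    simp only [Complex.re_sum, Complex.mul_re, Complex.mul_im, Complex.ofReal_re,
      Complex.ofReal_im, Complex.neg_re, Complex.neg_im, Complex.I_re, Complex.I_im,
      zero_mul, mul_zero, one_mul, zero_sub, sub_zero, zero_add, neg_neg, neg_mul,
      neg_zero] at hre
    convert hre using 2
  have hKim : ∀ j i, ∑ k, K i k * (v j k).im = -(μ j * (v j i).re) := by
    intro j i
    have h := congrFun (hKv j) i
    simp only [Matrix.mulVec, dotProduct, Pi.smul_apply, smul_eq_mul, cmap,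
      Matrix.map_apply] at h
    have him := congrArg Complex.im h
    simp only [Complex.im_sum, Complex.mul_re, Complex.mul_im, Complex.ofReal_re,
      Complex.ofReal_im, Complex.neg_re, Complex.neg_im, Complex.I_re, Complex.I_im,
      zero_mul, mul_zero, one_mul, zero_sub, sub_zero, zero_add, add_zero, neg_neg, neg_mul,
      neg_zero] at him
    convert him using 2
  have hsplit : ∀ j k, (∑ i, (v j i).re * (v k i).re = (if j = k then 1 else 0)/2)
      ∧ (∑ i, (v j i).im * (v k i).im = (if j = k then 1 else 0)/2)
      ∧ (∑ i, (v j i).re * (v k i).im = 0)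
      ∧ (∑ i, (v j i).im * (v k i).re = 0) := by
    intro j k
    have h1 := hon j k
    have h2 := hcrossv j k
    rw [Complex.ext_iff] at h1 h2
    simp only [Complex.re_sum, Complex.im_sum, Complex.mul_re, Complex.mul_im,
      Complex.conj_re, Complex.conj_im, Complex.zero_re, Complex.zero_im, neg_mul,
      sub_neg_eq_add, apply_ite Complex.re, apply_ite Complex.im, Complex.one_re,
      Complex.one_im] at h1 h2
    obtain ⟨h1re, h1im⟩ := h1
    obtain ⟨h2re, h2im⟩ := h2
    rw [Finset.sum_add_distrib] at h1re h2im
    rw [Finset.sum_sub_distrib] at h2re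
    simp only [← sub_eq_add_neg, ite_self] at h1im
    rw [Finset.sum_sub_distrib] at h1im
    refine ⟨by linarith, by linarith, by linarith, by linarith⟩
  -- real orthogonal matrix O from real and imaginary parts of eigenvectors
  have hs2 : Real.sqrt 2 * Real.sqrt 2 = 2 := Real.mul_self_sqrt (by norm_num)
  set Oa : Matrix (Fin n ⊕ Fin n) (Fin n) ℝ := Matrix.of fun i j => Real.sqrt 2 * (v j i).re
    with hOadef
  set Ob : Matrix (Fin n ⊕ Fin n) (Fin n) ℝ := Matrix.of fun i j => Real.sqrt 2 * (v j i).im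
    with hObdef
  set O := fromCols Oa Ob with hOdef
  have hpull : ∀ (x y : (Fin n ⊕ Fin n) → ℝ),
      ∑ i, (Real.sqrt 2 * x i) * (Real.sqrt 2 * y i) = 2 * ∑ i, x i * y i := by
    intro x y
    rw [Finset.mul_sum]
    refine Finset.sum_congr rfl fun i _ => ?_
    rw [show (Real.sqrt 2 * x i) * (Real.sqrt 2 * y i)
      = (Real.sqrt 2 * Real.sqrt 2) * (x i * y i) from by ring, hs2]
  have hOaOa : Oaᵀ * Oa = 1 := by
    ext j k
    rw [Matrix.mul_apply]
    simp only [transpose_apply, hOadef, Matrix.of_apply]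
    rw [hpull, (hsplit j k).1]
    by_cases h : j = k <;> simp [h, Matrix.one_apply]
  have hObOb : Obᵀ * Ob = 1 := by
    ext j k
    rw [Matrix.mul_apply]
    simp only [transpose_apply, hObdef, Matrix.of_apply]
    rw [hpull, (hsplit j k).2.1]
    by_cases h : j = k <;> simp [h, Matrix.one_apply]
  have hOaOb : Oaᵀ * Ob = 0 := by
    ext j k
    rw [Matrix.mul_apply]
    simp only [transpose_apply, hOadef, hObdef, Matrix.of_apply]
    rw [hpull, (hsplit j k).2.2.1]
    simp
  have hObOa : Obᵀ * Oa = 0 := by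
    ext j k
    rw [Matrix.mul_apply]
    simp only [transpose_apply, hOadef, hObdef, Matrix.of_apply]
    rw [hpull, (hsplit j k).2.2.2]
    simp
  have hOtO : Oᵀ * O = 1 := by
    rw [hOdef, transpose_fromCols, fromRows_mul_fromCols, hOaOa, hObOb, hOaOb, hObOa,
      fromBlocks_one]
  have hOOt : O * Oᵀ = 1 := mul_eq_one_comm.mp hOtO
  have cO : ∀ X : Matrix (Fin n ⊕ Fin n) (Fin n ⊕ Fin n) ℝ, Oᵀ * (O * X) = X := fun X => by
    rw [← Matrix.mul_assoc, hOtO, Matrix.one_mul]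
  have cO' : ∀ X : Matrix (Fin n ⊕ Fin n) (Fin n ⊕ Fin n) ℝ, O * (Oᵀ * X) = X := fun X => by
    rw [← Matrix.mul_assoc, hOOt, Matrix.one_mul]
  have cW : ∀ X : Matrix (Fin n ⊕ Fin n) (Fin n ⊕ Fin n) ℝ, W * (W⁻¹ * X) = X := fun X => by
    rw [← Matrix.mul_assoc, hWiW, Matrix.one_mul]
  -- K O = O Jlam
  have hKOa : K * Oa = Ob * diagonal μ := by
    ext i j
    rw [Matrix.mul_apply, Matrix.mul_diagonal]
    simp only [hOadef, hObdef, Matrix.of_apply]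
    calc ∑ k, K i k * (Real.sqrt 2 * (v j k).re)
        = Real.sqrt 2 * ∑ k, K i k * (v j k).re := by
          rw [Finset.mul_sum]
          exact Finset.sum_congr rfl fun _ _ => by ring
      _ = Real.sqrt 2 * (μ j * (v j i).im) := by rw [hKre]
      _ = _ := by ring
  have hKOb : K * Ob = -(Oa * diagonal μ) := by
    ext i j
    rw [Matrix.mul_apply, Matrix.neg_apply, Matrix.mul_diagonal]
    simp only [hOadef, hObdef, Matrix.of_apply]
    calc ∑ k, K i k * (Real.sqrt 2 * (v j k).im)
        = Real.sqrt 2 * ∑ k, K i k * (v j k).im := by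
          rw [Finset.mul_sum]
          exact Finset.sum_congr rfl fun _ _ => by ring
      _ = Real.sqrt 2 * (-(μ j * (v j i).re)) := by rw [hKim]
      _ = _ := by ring
  set Jlam := fromBlocks (0 : Matrix (Fin n) (Fin n) ℝ) (-(diagonal μ)) (diagonal μ) 0
    with hJlamdef
  have hKO : K * O = O * Jlam := by
    rw [hOdef, mul_fromCols, fromCols_mul_fromBlocks, hKOa, hKOb]
    rw [Matrix.mul_zero, Matrix.mul_zero, zero_add, add_zero, Matrix.mul_neg]
  have hKOJ : K = O * Jlam * Oᵀ := by
    rw [← hKO, Matrix.mul_assoc, hOOt, Matrix.mul_one]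
  -- the diagonal scaling matrices
  set sq : Fin n → ℝ := fun j => Real.sqrt (μ j) with hsqdef
  have hsqpos : ∀ j, 0 < sq j := fun j => Real.sqrt_pos.mpr (hμ j)
  have hsqmul : ∀ j, sq j * sq j = μ j := fun j => Real.mul_self_sqrt (hμ j).le
  set f : Fin n → ℝ := fun j => (sq j)⁻¹ with hfdef
  set Δi := fromBlocks (diagonal f) (0 : Matrix (Fin n) (Fin n) ℝ) 0 (diagonal f) with hΔidef
  set Δ := fromBlocks (diagonal sq) (0 : Matrix (Fin n) (Fin n) ℝ) 0 (diagonal sq) with hΔdef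
  have hfs : diagonal f * diagonal sq = (1 : Matrix (Fin n) (Fin n) ℝ) := by
    rw [diagonal_mul_diagonal,
      show (fun i => f i * sq i) = fun _ : Fin n => (1:ℝ) from
        funext fun j => inv_mul_cancel₀ (hsqpos j).ne', diagonal_one]
  have hsf : diagonal sq * diagonal f = (1 : Matrix (Fin n) (Fin n) ℝ) := by
    rw [diagonal_mul_diagonal,
      show (fun i => sq i * f i) = fun _ : Fin n => (1:ℝ) from
        funext fun j => mul_inv_cancel₀ (hsqpos j).ne', diagonal_one]
  have hdiag3 : diagonal f * diagonal μ * diagonal f = (1 : Matrix (Fin n) (Fin n) ℝ) := by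
    have hkey : (fun i => f i * μ i * f i) = fun _ : Fin n => (1:ℝ) := by
      funext j
      have h1 : f j = (sq j)⁻¹ := rfl
      rw [h1, ← hsqmul j]
      field_simp
      exact div_self (hsqpos j).ne'
    rw [diagonal_mul_diagonal, diagonal_mul_diagonal, hkey, diagonal_one]
  have hΔiΔ : Δi * Δ = 1 := by
    rw [hΔidef, hΔdef, fromBlocks_multiply]
    simp only [Matrix.mul_zero, Matrix.zero_mul, add_zero, zero_add, hfs]
    exact fromBlocks_one
  have hΔΔi : Δ * Δi = 1 := by
    rw [hΔidef, hΔdef, fromBlocks_multiply]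
    simp only [Matrix.mul_zero, Matrix.zero_mul, add_zero, zero_add, hsf]
    exact fromBlocks_one
  have hΔit : Δiᵀ = Δi := by
    rw [hΔidef, fromBlocks_transpose, diagonal_transpose]
    simp
  -- the symplectic matrix L
  set L := Δi * Oᵀ * W with hLdef
  set Linv := W⁻¹ * (O * Δ) with hLinvdef
  have hLt : Lᵀ = W * (O * Δi) := by
    rw [hLdef, transpose_mul, transpose_mul, hWt, transpose_transpose, hΔit]
  have hLLinv : L * Linv = 1 := by
    rw [hLdef, hLinvdef]
    simp only [Matrix.mul_assoc]
    rw [cW, cO]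
    exact hΔiΔ
  have hLinvL : Linv * L = 1 := by
    rw [hLdef, hLinvdef]
    simp only [Matrix.mul_assoc]
    have h1 : Δ * (Δi * (Oᵀ * W)) = Oᵀ * W := by
      rw [← Matrix.mul_assoc, hΔΔi, Matrix.one_mul]
    rw [h1, cO', hWWi]
  have hLJLt : L * sympJ n * Lᵀ = sympJ n := by
    rw [hLdef, hLt]
    simp only [Matrix.mul_assoc]
    have hWJW : W * (sympJ n * (W * (O * Δi))) = K * (O * Δi) := by
      rw [hKdef]
      simp only [Matrix.mul_assoc]
    rw [hWJW]
    have hKO' : K * (O * Δi) = O * (Jlam * Δi) := by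
      rw [← Matrix.mul_assoc, hKO, Matrix.mul_assoc]
    rw [hKO', cO]
    rw [hJlamdef, hΔidef, ← Matrix.mul_assoc, fromBlocks_multiply, fromBlocks_multiply]
    simp only [Matrix.mul_zero, Matrix.zero_mul, add_zero, zero_add, Matrix.mul_neg,
      Matrix.neg_mul, hdiag3, Matrix.zero_mul, Matrix.mul_zero]
    rw [neg_zero]
    rfl
  have hsymp : IsSymplectic L := isSymplectic_of_mul_J_mul_transpose hLJLt hLLinv hLinvL
  have hblk3 : Δi * fromBlocks (diagonal μ) (0 : Matrix (Fin n) (Fin n) ℝ) 0 (diagonal μ) * Δi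
      = 1 := by
    rw [hΔidef, fromBlocks_multiply, fromBlocks_multiply]
    simp only [Matrix.mul_zero, Matrix.zero_mul, add_zero, zero_add, hdiag3]
    exact fromBlocks_one
  have hdecomp : S = Lᵀ * fromBlocks (diagonal μ) 0 0 (diagonal μ) * L := by
    rw [hLt, hLdef]
    simp only [Matrix.mul_assoc]
    have h1 : Δi * (fromBlocks (diagonal μ) 0 0 (diagonal μ) * (Δi * (Oᵀ * W))) = Oᵀ * W := by
      rw [← Matrix.mul_assoc, ← Matrix.mul_assoc, hblk3, Matrix.one_mul]
    rw [h1, cO', hW]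
  exact ⟨L, μ, hμ, hsymp, hdecomp⟩



end GaussianAux

theorem mem_Kset_iff_sum_of_symplectic (n : ℕ)
    (S : Matrix (Fin n ⊕ Fin n) (Fin n ⊕ Fin n) ℝ) (hS : S.PosDef) :
    S ∈ Kset n ↔
      ∃ L M : Matrix (Fin n ⊕ Fin n) (Fin n ⊕ Fin n) ℝ,
        IsSymplectic L ∧ IsSymplectic M ∧
        S = (1 / 4 : ℝ) • (Lᵀ * L + Mᵀ * M) := by
  constructor
  · intro hK
    obtain ⟨hsymm, hpsd⟩ := hK
    obtain ⟨L, μ, hμ, hL, hdec⟩ := GaussianAux.williamson S hS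
    set Dblk := fromBlocks (diagonal μ) (0 : Matrix (Fin n) (Fin n) ℝ) 0 (diagonal μ)
      with hDblkdef
    -- L is invertible
    have hdetL : L.det ≠ 0 := by
      have h := congrArg Matrix.det hL
      rw [det_mul, det_mul, det_transpose] at h
      have h2 : L.det * L.det * (sympJ n).det = 1 * (sympJ n).det := by
        rw [one_mul]
        calc L.det * L.det * (sympJ n).det = L.det * (sympJ n).det * L.det := by ring
          _ = (sympJ n).det := h
      have h3 : L.det * L.det = 1 := mul_right_cancel₀ GaussianAux.sympJ_det_ne_zero h2
      intro hc
      rw [hc, mul_zero] at h3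
      exact zero_ne_one h3
    have hLu : IsUnit L.det := isUnit_iff_ne_zero.mpr hdetL
    have hLLi : L * L⁻¹ = 1 := Matrix.mul_nonsing_inv _ hLu
    -- the congruence identity
    set Nc := (2 : ℂ) • GaussianAux.cmap Dblk
      - Complex.I • GaussianAux.cmap (sympJ n) with hNcdef
    have hcong : (2 : ℂ) • S.map Complex.ofReal - Complex.I • (sympJ n).map Complex.ofReal
        = (GaussianAux.cmap L)ᴴ * Nc * GaussianAux.cmap L := by
      have e1 : (GaussianAux.cmap L)ᴴ = GaussianAux.cmap Lᵀ := GaussianAux.cmap_conjTranspose L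
      symm
      calc (GaussianAux.cmap L)ᴴ * Nc * GaussianAux.cmap L
          = (2 : ℂ) • (GaussianAux.cmap Lᵀ * GaussianAux.cmap Dblk * GaussianAux.cmap L)
            - Complex.I • (GaussianAux.cmap Lᵀ * GaussianAux.cmap (sympJ n)
              * GaussianAux.cmap L) := by
            rw [e1, hNcdef, Matrix.mul_sub, Matrix.sub_mul, Matrix.mul_smul, Matrix.smul_mul,
              Matrix.mul_smul, Matrix.smul_mul]
        _ = (2 : ℂ) • GaussianAux.cmap (Lᵀ * Dblk * L)
            - Complex.I • GaussianAux.cmap (Lᵀ * sympJ n * L) := by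
            rw [GaussianAux.cmap_mul, GaussianAux.cmap_mul, GaussianAux.cmap_mul,
              GaussianAux.cmap_mul]
        _ = (2 : ℂ) • S.map Complex.ofReal - Complex.I • (sympJ n).map Complex.ofReal := by
            rw [← hdec, hL]
            rfl
    -- Nc is psd
    have hpsdN : Nc.PosSemidef := by
      have h2 := hpsd.conjTranspose_mul_mul_same (GaussianAux.cmap L⁻¹)
      have e1 : GaussianAux.cmap L * GaussianAux.cmap L⁻¹ = 1 := by
        rw [← GaussianAux.cmap_mul, hLLi, GaussianAux.cmap_one]
      have e4 : Nc = (GaussianAux.cmap L⁻¹)ᴴ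
          * ((2 : ℂ) • S.map Complex.ofReal - Complex.I • (sympJ n).map Complex.ofReal)
          * GaussianAux.cmap L⁻¹ := by
        rw [hcong]
        calc Nc = ((GaussianAux.cmap L * GaussianAux.cmap L⁻¹)ᴴ) * Nc
              * (GaussianAux.cmap L * GaussianAux.cmap L⁻¹) := by
              rw [e1, conjTranspose_one, Matrix.one_mul, Matrix.mul_one]
          _ = _ := by
              rw [conjTranspose_mul]
              simp only [Matrix.mul_assoc]
      rw [e4]
      exact h2
    -- evaluate the quadratic form
    have hμhalf : ∀ j, (1:ℝ)/2 ≤ μ j := by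
      intro j
      set w : (Fin n ⊕ Fin n) → ℂ :=
        Sum.elim (fun k => if k = j then (1:ℂ) else 0) (fun k => if k = j then Complex.I else 0)
        with hwdef
      have hDw : GaussianAux.cmap Dblk *ᵥ w = ((μ j : ℝ) : ℂ) • w := by
        funext q
        rcases q with k | k <;>
          simp [hwdef, Matrix.mulVec, dotProduct, Fintype.sum_sum_type,
            GaussianAux.cmap, hDblkdef, Matrix.fromBlocks, Matrix.diagonal_apply, ite_mul,
            mul_ite, Finset.sum_ite_eq, Finset.mem_univ] <;>
          by_cases hk : k = j <;> simp [hk]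
      have hJw : GaussianAux.cmap (sympJ n) *ᵥ w = (-Complex.I) • w := by
        funext q
        rcases q with k | k <;>
          simp [hwdef, Matrix.mulVec, dotProduct, Fintype.sum_sum_type,
            GaussianAux.cmap, sympJ, Matrix.fromBlocks, Matrix.one_apply, ite_mul,
            mul_ite, Finset.sum_ite_eq, Finset.mem_univ] <;>
          by_cases hk : k = j <;> simp [hk]
      have hNw : Nc *ᵥ w = ((2 * μ j - 1 : ℝ) : ℂ) • w := by
        rw [hNcdef, Matrix.sub_mulVec, smul_mulVec, smul_mulVec, hDw, hJw,
          smul_smul, smul_smul]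
        rw [← sub_smul]
        congr 1
        push_cast
        ring_nf
        rw [Complex.I_sq]
        ring
      have hsww : star w ⬝ᵥ w = 2 := by
        simp [hwdef, dotProduct, Fintype.sum_sum_type, Pi.star_apply, Complex.star_def,
          apply_ite (starRingEnd ℂ), ite_mul, mul_ite, Finset.sum_ite_eq, Finset.mem_univ]
        norm_num
      have h0 := hpsdN.dotProduct_mulVec_nonneg w
      rw [hNw, dotProduct_smul, hsww, smul_eq_mul] at h0
      rw [Complex.le_def] at h0
      have hre := h0.1
      simp only [Complex.zero_re, Complex.mul_re, Complex.ofReal_re, Complex.ofReal_im,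
        Complex.re_ofNat, Complex.im_ofNat, zero_mul, mul_zero, sub_zero] at hre
      linarith
    -- construct the two symplectic matrices
    set x : Fin n → ℝ := fun j => 2 * μ j + Real.sqrt ((2 * μ j)^2 - 1) with hxdef
    set y : Fin n → ℝ := fun j => 2 * μ j - Real.sqrt ((2 * μ j)^2 - 1) with hydef
    have hs_nonneg : ∀ j, (0:ℝ) ≤ (2 * μ j)^2 - 1 := by
      intro j
      have := hμhalf j
      nlinarith
    have hss : ∀ j, Real.sqrt ((2 * μ j)^2 - 1) * Real.sqrt ((2 * μ j)^2 - 1)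
        = (2 * μ j)^2 - 1 := fun j => Real.mul_self_sqrt (hs_nonneg j)
    have hxy : ∀ j, x j * y j = 1 := by
      intro j
      rw [hxdef, hydef]
      simp only []
      nlinarith [hss j]
    have hxpos : ∀ j, 0 < x j := by
      intro j
      have h1 := hμhalf j
      have h2 := Real.sqrt_nonneg ((2 * μ j)^2 - 1)
      rw [hxdef]
      simp only []
      linarith
    have hypos : ∀ j, 0 < y j := by
      intro j
      have h1 := hxy j
      have h2 := hxpos j
      nlinarith
    have hxaddy : ∀ j, x j + y j = 4 * μ j := by
      intro j
      rw [hxdef, hydef]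
      ring
    set X := fromBlocks (diagonal fun j => Real.sqrt (x j)) (0 : Matrix (Fin n) (Fin n) ℝ) 0
      (diagonal fun j => Real.sqrt (y j)) with hXdef
    set Y := fromBlocks (diagonal fun j => Real.sqrt (y j)) (0 : Matrix (Fin n) (Fin n) ℝ) 0
      (diagonal fun j => Real.sqrt (x j)) with hYdef
    have hsqxy : (diagonal fun j => Real.sqrt (x j)) * (diagonal fun j => Real.sqrt (y j))
        = (1 : Matrix (Fin n) (Fin n) ℝ) := by
      rw [diagonal_mul_diagonal,
        show (fun i => Real.sqrt (x i) * Real.sqrt (y i)) = fun _ : Fin n => (1:ℝ) from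
          funext fun j => by rw [← Real.sqrt_mul (hxpos j).le, hxy j, Real.sqrt_one],
        diagonal_one]
    have hsqyx : (diagonal fun j => Real.sqrt (y j)) * (diagonal fun j => Real.sqrt (x j))
        = (1 : Matrix (Fin n) (Fin n) ℝ) := by
      rw [diagonal_mul_diagonal,
        show (fun i => Real.sqrt (y i) * Real.sqrt (x i)) = fun _ : Fin n => (1:ℝ) from
          funext fun j => by
            rw [mul_comm, ← Real.sqrt_mul (hxpos j).le, hxy j, Real.sqrt_one],
        diagonal_one]
    have hXt : Xᵀ = X := by
      rw [hXdef, fromBlocks_transpose, diagonal_transpose, diagonal_transpose]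
      simp
    have hYt : Yᵀ = Y := by
      rw [hYdef, fromBlocks_transpose, diagonal_transpose, diagonal_transpose]
      simp
    have hXsymp : IsSymplectic X := by
      unfold IsSymplectic
      rw [hXt, hXdef, sympJ, fromBlocks_multiply, fromBlocks_multiply]
      simp only [Matrix.mul_zero, Matrix.zero_mul, add_zero, zero_add, Matrix.mul_neg,
        Matrix.mul_one, Matrix.one_mul, Matrix.neg_mul, zero_mul, mul_zero]
      rw [hsqxy, hsqyx]
    have hYsymp : IsSymplectic Y := by
      unfold IsSymplectic
      rw [hYt, hYdef, sympJ, fromBlocks_multiply, fromBlocks_multiply]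
      simp only [Matrix.mul_zero, Matrix.zero_mul, add_zero, zero_add, Matrix.mul_neg,
        Matrix.mul_one, Matrix.one_mul, Matrix.neg_mul, zero_mul, mul_zero]
      rw [hsqxy, hsqyx]
    have hXX : X * X = fromBlocks (diagonal x) (0 : Matrix (Fin n) (Fin n) ℝ) 0 (diagonal y) := by
      rw [hXdef, fromBlocks_multiply]
      simp only [Matrix.mul_zero, Matrix.zero_mul, add_zero, zero_add]
      rw [diagonal_mul_diagonal, diagonal_mul_diagonal,
        show (fun i => Real.sqrt (x i) * Real.sqrt (x i)) = x from
          funext fun j => Real.mul_self_sqrt (hxpos j).le,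
        show (fun i => Real.sqrt (y i) * Real.sqrt (y i)) = y from
          funext fun j => Real.mul_self_sqrt (hypos j).le]
    have hYY : Y * Y = fromBlocks (diagonal y) (0 : Matrix (Fin n) (Fin n) ℝ) 0 (diagonal x) := by
      rw [hYdef, fromBlocks_multiply]
      simp only [Matrix.mul_zero, Matrix.zero_mul, add_zero, zero_add]
      rw [diagonal_mul_diagonal, diagonal_mul_diagonal,
        show (fun i => Real.sqrt (x i) * Real.sqrt (x i)) = x from
          funext fun j => Real.mul_self_sqrt (hxpos j).le,
        show (fun i => Real.sqrt (y i) * Real.sqrt (y i)) = y from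
          funext fun j => Real.mul_self_sqrt (hypos j).le]
    have hkey : Xᵀ * X + Yᵀ * Y = (4:ℝ) • Dblk := by
      rw [hXt, hYt, hXX, hYY, hDblkdef, fromBlocks_add]
      ext q r
      rcases q with a|a <;> rcases r with b|b <;>
        simp only [Matrix.fromBlocks_apply₁₁, Matrix.fromBlocks_apply₁₂,
          Matrix.fromBlocks_apply₂₁, Matrix.fromBlocks_apply₂₂, Matrix.smul_apply,
          Matrix.add_apply, Matrix.diagonal_apply, Matrix.zero_apply, smul_eq_mul,
          add_zero, mul_zero] <;>
        first
          | rfl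
          | (by_cases hab : a = b <;> simp [hab, hxaddy, add_comm] <;> linarith [hxaddy b])
    refine ⟨X * L, Y * L, GaussianAux.isSymplectic_mul hXsymp hL,
      GaussianAux.isSymplectic_mul hYsymp hL, ?_⟩
    rw [transpose_mul, transpose_mul]
    have hre : Lᵀ * Xᵀ * (X * L) + Lᵀ * Yᵀ * (Y * L) = Lᵀ * ((Xᵀ * X + Yᵀ * Y) * L) := by
      rw [Matrix.add_mul, Matrix.mul_add]
      simp only [Matrix.mul_assoc]
    rw [hre, hkey, Matrix.smul_mul, Matrix.mul_smul, smul_smul]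
    norm_num
    rw [← Matrix.mul_assoc]
    exact hdec
  · rintro ⟨L, M, hL, hM, hSd⟩
    exact GaussianAux.easy_direction hL hM hSd
end
end

section
/- Extreme points of K_n: a matrix S is an extreme point of the convex set K_n = {S real symmetric of order 2n : 2S - iJ ≥ 0} if and only if S = ½LᵀL for some L ∈ Sp(2n,ℝ). -/
open Matrix
open scoped ComplexOrder

noncomputable section

namespace ExtremeAux

variable {n : ℕ}

/-- complexification ring hom -/
def cm {n : ℕ} : Matrix (Fin n ⊕ Fin n) (Fin n ⊕ Fin n) ℝ →+*
    Matrix (Fin n ⊕ Fin n) (Fin n ⊕ Fin n) ℂ := Complex.ofRealHom.mapMatrix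

lemma cm_apply (M : Matrix (Fin n ⊕ Fin n) (Fin n ⊕ Fin n) ℝ) :
    cm M = M.map Complex.ofReal := rfl

lemma cm_entry (M : Matrix (Fin n ⊕ Fin n) (Fin n ⊕ Fin n) ℝ) (i j) :
    cm M i j = (M i j : ℂ) := rfl

lemma cm_transpose (M : Matrix (Fin n ⊕ Fin n) (Fin n ⊕ Fin n) ℝ) :
    (cm M)ᵀ = cm Mᵀ := rfl

lemma cm_conjTranspose (M : Matrix (Fin n ⊕ Fin n) (Fin n ⊕ Fin n) ℝ) :
    (cm M)ᴴ = cm Mᵀ := by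
  ext i j
  simp [conjTranspose_apply, cm_entry, Complex.conj_ofReal]

lemma cm_smul (c : ℝ) (M : Matrix (Fin n ⊕ Fin n) (Fin n ⊕ Fin n) ℝ) :
    cm (c • M) = (c : ℂ) • cm M := by
  ext i j
  simp [cm_entry]

lemma cm_injective : Function.Injective (cm (n := n)) := by
  intro M N h
  ext i j
  have h' := congrFun (congrFun h i) j
  rw [cm_entry, cm_entry] at h'
  exact_mod_cast h'

/-- conjugation ring hom -/
def cj {n : ℕ} : Matrix (Fin n ⊕ Fin n) (Fin n ⊕ Fin n) ℂ →+*
    Matrix (Fin n ⊕ Fin n) (Fin n ⊕ Fin n) ℂ := (starRingEnd ℂ).mapMatrix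

lemma cj_apply (M : Matrix (Fin n ⊕ Fin n) (Fin n ⊕ Fin n) ℂ) (i j) :
    cj M i j = (starRingEnd ℂ) (M i j) := rfl

lemma cj_cm (M : Matrix (Fin n ⊕ Fin n) (Fin n ⊕ Fin n) ℝ) : cj (cm M) = cm M := by
  ext i j
  simp [cj_apply, cm_entry, Complex.conj_ofReal]


/-- the complex matrix K = i J -/
def Kc (n : ℕ) : Matrix (Fin n ⊕ Fin n) (Fin n ⊕ Fin n) ℂ :=
  Complex.I • (sympJ n).map Complex.ofReal

lemma Kc_eq : Kc n = Complex.I • cm (sympJ n) := rfl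

lemma sympJ_transpose : (sympJ n)ᵀ = -sympJ n := by
  simp [sympJ, fromBlocks_transpose, Matrix.fromBlocks_neg]

lemma sympJ_mul_sympJ : sympJ n * sympJ n = -1 := by
  simp [sympJ, fromBlocks_multiply, ← fromBlocks_one, Matrix.fromBlocks_neg]

lemma Kc_mul_Kc : Kc n * Kc n = 1 := by
  rw [Kc_eq, Matrix.smul_mul, Matrix.mul_smul, smul_smul, Complex.I_mul_I, ← _root_.map_mul cm,
    sympJ_mul_sympJ, map_neg, _root_.map_one cm, neg_smul, one_smul, neg_neg]

lemma Kc_transpose : (Kc n)ᵀ = -Kc n := by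
  rw [Kc_eq, Matrix.transpose_smul, cm_transpose, sympJ_transpose, map_neg, smul_neg]

lemma Kc_conjTranspose : (Kc n)ᴴ = Kc n := by
  rw [Kc_eq, Matrix.conjTranspose_smul, cm_conjTranspose, sympJ_transpose, map_neg]
  simp [Complex.conj_I, Kc_eq]

lemma cj_Kc : cj (Kc n) = -Kc n := by
  ext i j
  simp [cj_apply, Kc_eq, cm_entry, Complex.conj_ofReal, Matrix.smul_apply]

lemma psd_half {M : Matrix (Fin n ⊕ Fin n) (Fin n ⊕ Fin n) ℂ} (h : M.PosSemidef) :
    ((1/2 : ℂ) • M).PosSemidef := by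
  refine Matrix.PosSemidef.of_dotProduct_mulVec_nonneg ?_ ?_
  · rw [Matrix.IsHermitian, Matrix.conjTranspose_smul, h.1.eq]
    norm_num
  · intro x
    rw [Matrix.smul_mulVec, dotProduct_smul, smul_eq_mul]
    have h2 : (0:ℂ) ≤ 1/2 := by
      rw [Complex.le_def]
      norm_num
    exact mul_nonneg h2 (h.dotProduct_mulVec_nonneg x)

lemma psd_cancel {D₁ D₂ N : Matrix (Fin n ⊕ Fin n) (Fin n ⊕ Fin n) ℂ}
    (h₁ : D₁.PosSemidef) (h₂ : D₂.PosSemidef) (h : (D₁ + D₂) * N = 0) :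
    D₁ * N = 0 := by
  have hcol : ∀ j, D₁ *ᵥ (fun k => N k j) = 0 := by
    intro j
    set x : (Fin n ⊕ Fin n) → ℂ := fun k => N k j with hxdef
    have hx : (D₁ + D₂) *ᵥ x = 0 := by
      funext i
      have h' := congrFun (congrFun h i) j
      simpa [Matrix.mul_apply, Matrix.mulVec, dotProduct, hxdef] using h'
    have hq : star x ⬝ᵥ D₁ *ᵥ x + star x ⬝ᵥ D₂ *ᵥ x = 0 := by
      rw [← dotProduct_add, ← Matrix.add_mulVec, hx, dotProduct_zero]
    have hq1 : star x ⬝ᵥ D₁ *ᵥ x = 0 := by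
      have h1 := h₁.dotProduct_mulVec_nonneg x
      have h2 := h₂.dotProduct_mulVec_nonneg x
      have heq : star x ⬝ᵥ D₁ *ᵥ x = -(star x ⬝ᵥ D₂ *ᵥ x) := by linear_combination hq
      have : star x ⬝ᵥ D₁ *ᵥ x ≤ 0 := by
        rw [heq, neg_nonpos]
        exact h2
      exact le_antisymm this h1
    exact (h₁.dotProduct_mulVec_zero_iff x).mp hq1
  ext i j
  have h' := congrFun (hcol j) i
  simpa [Matrix.mul_apply, Matrix.mulVec, dotProduct] using h'


lemma sq_determines (L Li : Matrix (Fin n ⊕ Fin n) (Fin n ⊕ Fin n) ℝ)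
    (hinv : L * Li = 1) {S₁ : Matrix (Fin n ⊕ Fin n) (Fin n ⊕ Fin n) ℝ}
    (hker : (cm ((2:ℝ) • S₁) - Kc n) * (cm Li * (1 + Kc n)) = 0) :
    cm ((2:ℝ) • S₁) = Kc n * cm Li * Kc n * cm L := by
  set A := cm ((2:ℝ) • S₁) with hA
  set K := Kc n with hK
  set Mi := cm Li with hMi
  set M := cm L with hM
  have hMMi : M * Mi = 1 := by rw [hM, hMi, ← _root_.map_mul cm, hinv, _root_.map_one cm]
  have E2 : (A + K) * (Mi * (1 - K)) = 0 := by
    have := congrArg (cj (n := n)) hker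
    rw [_root_.map_mul cj, _root_.map_sub cj, _root_.map_mul cj, _root_.map_add cj,
      _root_.map_one cj, map_zero] at this
    rw [hA, hK, hMi] at this ⊢
    rwa [cj_cm, cj_cm, cj_Kc, sub_neg_eq_add, ← sub_eq_add_neg] at this
  have hsum : (A - K) * (Mi * (1 + K)) + (A + K) * (Mi * (1 - K))
      = (A * Mi + A * Mi) - (K * Mi * K + K * Mi * K) := by noncomm_ring
  rw [hker, E2, add_zero] at hsum
  have h3 : A * Mi + A * Mi = K * Mi * K + K * Mi * K := by
    have := hsum.symm
    rw [sub_eq_zero] at this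
    exact this
  have h4 : A * Mi = K * Mi * K := by
    have h5 : A * Mi + A * Mi = K * Mi * K + K * Mi * K := h3
    rwa [← two_smul ℂ, ← two_smul ℂ (K * Mi * K), smul_right_injective _ (two_ne_zero)
      |>.eq_iff] at h5
  calc A = A * (Mi * M) := by
        rw [hMi, hM, ← _root_.map_mul cm]
        rw [mul_eq_one_comm] at hinv
        rw [hinv, _root_.map_one cm, mul_one]
    _ = (A * Mi) * M := by rw [mul_assoc]
    _ = K * Mi * K * M := by rw [h4]


lemma symplectic_inv {L : Matrix (Fin n ⊕ Fin n) (Fin n ⊕ Fin n) ℝ} (hL : IsSymplectic L) :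
    (-(sympJ n) * Lᵀ * sympJ n) * L = 1 := by
  have h1 : (-(sympJ n) * Lᵀ * sympJ n) * L = -(sympJ n * (Lᵀ * sympJ n * L)) := by
    noncomm_ring
  rw [h1, hL, sympJ_mul_sympJ, neg_neg]

lemma symplectic_c {L : Matrix (Fin n ⊕ Fin n) (Fin n ⊕ Fin n) ℝ} (hL : IsSymplectic L) :
    (cm L)ᵀ * Kc n * cm L = Kc n := by
  rw [Kc_eq, Matrix.mul_smul, Matrix.smul_mul, cm_transpose, ← _root_.map_mul cm,
    ← _root_.map_mul cm, hL]

lemma one_sub_Kc_posSemidef : (1 - Kc n).PosSemidef := by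
  have hherm : (1 - Kc n)ᴴ = 1 - Kc n := by
    rw [Matrix.conjTranspose_sub, Kc_conjTranspose, Matrix.conjTranspose_one]
  have hsq : (1 - Kc n) * (1 - Kc n) = 1 - Kc n - Kc n + Kc n * Kc n := by noncomm_ring
  rw [Kc_mul_Kc] at hsq
  have h2 : 1 - Kc n = (1/2 : ℂ) • ((1 - Kc n) * (1 - Kc n)) := by
    rw [hsq]
    have : (1 : Matrix (Fin n ⊕ Fin n) (Fin n ⊕ Fin n) ℂ) - Kc n - Kc n + 1
        = (2:ℂ) • (1 - Kc n) := by
      rw [two_smul]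
      abel
    rw [this, smul_smul]
    norm_num
  rw [h2]
  apply psd_half
  have := Matrix.posSemidef_conjTranspose_mul_self (1 - Kc n)
  rwa [hherm] at this

lemma mem_Kset_of_symplectic {L : Matrix (Fin n ⊕ Fin n) (Fin n ⊕ Fin n) ℝ}
    (hL : IsSymplectic L) : ((1/2 : ℝ) • (Lᵀ * L)) ∈ Kset n := by
  constructor
  · show ((1/2 : ℝ) • (Lᵀ * L))ᵀ = _
    rw [Matrix.transpose_smul, Matrix.transpose_mul, Matrix.transpose_transpose]
  · have key : (2 : ℂ) • ((1/2:ℝ) • (Lᵀ * L)).map Complex.ofReal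
        - Complex.I • (sympJ n).map Complex.ofReal
        = (cm L)ᵀ * (1 - Kc n) * cm L := by
      have h0 : (2 : ℂ) • ((1/2:ℝ) • (Lᵀ * L)).map Complex.ofReal = cm (Lᵀ * L) := by
        ext i j
        simp [cm_entry, Matrix.smul_apply, Matrix.map_apply]
      rw [h0]
      have h1 : cm (Lᵀ * L) = (cm L)ᵀ * cm L := by
        rw [cm_transpose, ← _root_.map_mul cm]
      rw [h1, show Complex.I • (sympJ n).map Complex.ofReal = Kc n from rfl,
        Matrix.mul_sub, Matrix.mul_one, Matrix.sub_mul, symplectic_c hL]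
    rw [key]
    have := (one_sub_Kc_posSemidef (n := n)).conjTranspose_mul_mul_same (cm L)
    rwa [cm_conjTranspose, ← cm_transpose] at this


lemma Kset_psd {S' : Matrix (Fin n ⊕ Fin n) (Fin n ⊕ Fin n) ℝ} (h : S' ∈ Kset n) :
    (cm ((2:ℝ) • S') - Kc n).PosSemidef := by
  have h2 := h.2
  have h0 : (2:ℂ) • S'.map Complex.ofReal = cm ((2:ℝ) • S') := by
    ext i j
    simp [cm_entry, Matrix.smul_apply, Matrix.map_apply]
  rwa [h0, show Complex.I • (sympJ n).map Complex.ofReal = Kc n from rfl] at h2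

lemma X_eq_Y {L : Matrix (Fin n ⊕ Fin n) (Fin n ⊕ Fin n) ℝ} (hL : IsSymplectic L) :
    (cm L)ᵀ * (1 - Kc n) * cm L = (cm L)ᵀ * cm L - Kc n := by
  rw [Matrix.mul_sub, Matrix.mul_one, Matrix.sub_mul, symplectic_c hL]

lemma one_sub_mul_one_add : (1 - Kc n) * (1 + Kc n) = 0 := by
  have e1 : (1 - Kc n) * (1 + Kc n) = 1 + Kc n - Kc n - Kc n * Kc n := by noncomm_ring
  rw [Kc_mul_Kc] at e1
  rw [e1]
  abel

lemma extreme_of_symplectic {L S S₁ S₂ : Matrix (Fin n ⊕ Fin n) (Fin n ⊕ Fin n) ℝ}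
    (hL : IsSymplectic L) (hS : S = (1/2 : ℝ) • (Lᵀ * L))
    (h₁ : S₁ ∈ Kset n) (h₂ : S₂ ∈ Kset n) (heq : S = (1/2 : ℝ) • (S₁ + S₂)) :
    S₁ = S ∧ S₂ = S := by
  set Li : Matrix (Fin n ⊕ Fin n) (Fin n ⊕ Fin n) ℝ := -(sympJ n) * Lᵀ * sympJ n with hLi
  have hinv' : Li * L = 1 := symplectic_inv hL
  have hinv : L * Li = 1 := mul_eq_one_comm.mpr hinv'
  have hcmLLi : cm L * cm Li = 1 := by
    rw [← _root_.map_mul cm, hinv, _root_.map_one cm]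
  set K := Kc n with hK
  set N : Matrix (Fin n ⊕ Fin n) (Fin n ⊕ Fin n) ℂ := cm Li * (1 + K) with hN
  have hsum12 : S₁ + S₂ = Lᵀ * L := by
    have := hS.symm.trans heq
    exact smul_right_injective _ (by norm_num : (1/2:ℝ) ≠ 0) this.symm
  have hcmT : cm (Lᵀ * L) = (cm L)ᵀ * cm L := by rw [cm_transpose, ← _root_.map_mul cm]
  have hP : cm ((2:ℝ) • S₁) + cm ((2:ℝ) • S₂) = ((cm L)ᵀ * cm L) + ((cm L)ᵀ * cm L) := by
    rw [← _root_.map_add cm, ← smul_add, hsum12, cm_smul, hcmT]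
    norm_num [two_smul]
  have hXN : ((cm L)ᵀ * (1 - K) * cm L) * N = 0 := by
    have ha : ((cm L)ᵀ * (1 - K) * cm L) * N
        = (cm L)ᵀ * (1 - K) * (cm L * cm Li) * (1 + K) := by
      rw [hN]
      noncomm_ring
    rw [ha, hcmLLi, mul_one, mul_assoc, one_sub_mul_one_add, mul_zero]
  have hDsum : ((cm ((2:ℝ) • S₁) - K) + (cm ((2:ℝ) • S₂) - K)) * N = 0 := by
    have hb : (cm ((2:ℝ) • S₁) - K) + (cm ((2:ℝ) • S₂) - K)
        = (cm ((2:ℝ) • S₁) + cm ((2:ℝ) • S₂)) - K - K := by abel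
    rw [hb, hP]
    have hc : ((cm L)ᵀ * cm L + (cm L)ᵀ * cm L) - K - K
        = ((cm L)ᵀ * cm L - K) + ((cm L)ᵀ * cm L - K) := by abel
    rw [hc, ← X_eq_Y hL, Matrix.add_mul, hXN]
    simp
  have hker₁ : (cm ((2:ℝ) • S₁) - K) * N = 0 :=
    psd_cancel (Kset_psd h₁) (Kset_psd h₂) hDsum
  have hker₂ : (cm ((2:ℝ) • S₂) - K) * N = 0 := by
    apply psd_cancel (Kset_psd h₂) (Kset_psd h₁)
    rwa [add_comm] at hDsum
  have hd₁ := sq_determines L Li hinv hker₁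
  have hd₂ := sq_determines L Li hinv hker₂
  have h12 : S₁ = S₂ := by
    have := cm_injective (hd₁.trans hd₂.symm)
    exact smul_right_injective _ (by norm_num : (2:ℝ) ≠ 0) this
  have hS1 : S₁ = S := by
    rw [heq, ← h12, ← two_smul ℝ S₁, smul_smul]
    norm_num
  exact ⟨hS1, h12 ▸ hS1⟩


lemma real_conjTranspose (M : Matrix (Fin n ⊕ Fin n) (Fin n ⊕ Fin n) ℝ) : Mᴴ = Mᵀ := by
  ext i j
  simp [Matrix.conjTranspose_apply]

lemma cm_mulVec (M : Matrix (Fin n ⊕ Fin n) (Fin n ⊕ Fin n) ℝ) (x : Fin n ⊕ Fin n → ℝ) :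
    cm M *ᵥ (fun i => (x i : ℂ)) = fun i => ((M *ᵥ x) i : ℂ) := by
  funext i
  simp only [Matrix.mulVec, dotProduct, cm_entry]
  push_cast
  rfl

lemma dotProduct_real (x v : Fin n ⊕ Fin n → ℝ) :
    (fun i => (x i : ℂ)) ⬝ᵥ (fun i => (v i : ℂ)) = ((x ⬝ᵥ v : ℝ) : ℂ) := by
  simp only [dotProduct]
  push_cast
  rfl

lemma star_real_vec (x : Fin n ⊕ Fin n → ℝ) :
    star (fun i => (x i : ℂ)) = fun i => (x i : ℂ) := by
  funext i
  simp [Complex.conj_ofReal]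

lemma sympJ_quad_zero (x : Fin n ⊕ Fin n → ℝ) : x ⬝ᵥ (sympJ n *ᵥ x) = 0 := by
  have h1 : x ⬝ᵥ (sympJ n *ᵥ x) = ((sympJ n)ᵀ *ᵥ x) ⬝ᵥ x := by
    rw [Matrix.dotProduct_mulVec, Matrix.mulVec_transpose]
  have h2 : ((sympJ n)ᵀ *ᵥ x) ⬝ᵥ x = -(x ⬝ᵥ (sympJ n *ᵥ x)) := by
    rw [sympJ_transpose, Matrix.neg_mulVec, neg_dotProduct, dotProduct_comm]
  have := h1.trans h2
  linarith

lemma posDef_of_mem {S : Matrix (Fin n ⊕ Fin n) (Fin n ⊕ Fin n) ℝ} (h : S ∈ Kset n) :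
    S.PosDef := by
  have hD := Kset_psd h
  refine Matrix.PosDef.of_dotProduct_mulVec_pos ?_ ?_
  · rw [Matrix.IsHermitian, real_conjTranspose]
    exact h.1
  · intro x hx
    have eA : (fun i => ((x i : ℝ) : ℂ)) ⬝ᵥ (cm ((2:ℝ) • S) *ᵥ (fun i => ((x i : ℝ) : ℂ)))
        = ((x ⬝ᵥ ((2:ℝ) • S) *ᵥ x : ℝ) : ℂ) := by
      rw [cm_mulVec, dotProduct_real]
    have eB : (fun i => ((x i : ℝ) : ℂ)) ⬝ᵥ (Kc n *ᵥ (fun i => ((x i : ℝ) : ℂ)))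
        = Complex.I * ((x ⬝ᵥ (sympJ n *ᵥ x) : ℝ) : ℂ) := by
      rw [Kc_eq, Matrix.smul_mulVec Complex.I, dotProduct_smul, cm_mulVec,
        dotProduct_real, smul_eq_mul]
    have hquad : star (fun i => ((x i : ℝ) : ℂ)) ⬝ᵥ ((cm ((2:ℝ) • S) - Kc n) *ᵥ (fun i => ((x i : ℝ) : ℂ)))
        = ((x ⬝ᵥ ((2:ℝ) • S) *ᵥ x : ℝ) : ℂ) - Complex.I * ((x ⬝ᵥ (sympJ n *ᵥ x) : ℝ) : ℂ) := by
      rw [star_real_vec, Matrix.sub_mulVec, dotProduct_sub, eA, eB]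
    rw [sympJ_quad_zero] at hquad
    have hq2 : x ⬝ᵥ ((2:ℝ) • S) *ᵥ x = 2 * (x ⬝ᵥ S *ᵥ x) := by
      rw [Matrix.smul_mulVec, dotProduct_smul, smul_eq_mul]
    have hq0 : (0:ℝ) ≤ 2 * (x ⬝ᵥ S *ᵥ x) := by
      have h5 := hD.dotProduct_mulVec_nonneg (fun i => ((x i : ℝ) : ℂ))
      rw [hquad] at h5
      have h6 : (0:ℂ) ≤ ((x ⬝ᵥ ((2:ℝ) • S) *ᵥ x : ℝ) : ℂ) := by
        simpa [sympJ_quad_zero] using h5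
      rw [Complex.zero_le_real, hq2] at h6
      exact h6
    have hne : x ⬝ᵥ S *ᵥ x ≠ 0 := by
      intro h0
      have hzero : star (fun i => ((x i : ℝ) : ℂ)) ⬝ᵥ ((cm ((2:ℝ) • S) - Kc n) *ᵥ (fun i => ((x i : ℝ) : ℂ))) = 0 := by
        rw [hquad, hq2, h0]
        simp
      have hker := (hD.dotProduct_mulVec_zero_iff _).mp hzero
      have hJx : sympJ n *ᵥ x = 0 := by
        funext i
        have hi := congrFun hker i
        rw [Matrix.sub_mulVec] at hi
        have e1 : (cm ((2:ℝ) • S) *ᵥ (fun i => ((x i : ℝ) : ℂ))) i = ((((2:ℝ) • S) *ᵥ x) i : ℂ) := by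
          rw [cm_mulVec]
        have e2 : (Kc n *ᵥ (fun i => ((x i : ℝ) : ℂ))) i = Complex.I * (((sympJ n *ᵥ x) i : ℝ) : ℂ) := by
          rw [Kc_eq, Matrix.smul_mulVec, cm_mulVec]
          simp
        rw [Pi.sub_apply, e1, e2] at hi
        have him := congrArg Complex.im hi
        simpa using him
      have hx0 : x = 0 := by
        have h2 : sympJ n *ᵥ (sympJ n *ᵥ x) = 0 := by rw [hJx, Matrix.mulVec_zero]
        rw [Matrix.mulVec_mulVec, sympJ_mul_sympJ] at h2
        have h3 : -x = 0 := by
          rw [← h2]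
          funext i
          simp [Matrix.neg_mulVec]
        simpa [neg_eq_zero] using h3
      exact hx hx0
    have hge : 0 ≤ x ⬝ᵥ S *ᵥ x := by linarith
    have hlt : 0 < x ⬝ᵥ S *ᵥ x := lt_of_le_of_ne hge (Ne.symm hne)
    simpa using hlt


lemma mem_Kset_iff {S' : Matrix (Fin n ⊕ Fin n) (Fin n ⊕ Fin n) ℝ} :
    S' ∈ Kset n ↔ S'.IsSymm ∧ (cm ((2:ℝ) • S') - Kc n).PosSemidef := by
  have h0 : (2:ℂ) • S'.map Complex.ofReal = cm ((2:ℝ) • S') := by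
    ext i j
    simp [cm_entry, Matrix.smul_apply, Matrix.map_apply]
  constructor
  · intro h
    exact ⟨h.1, Kset_psd h⟩
  · intro h
    refine ⟨h.1, ?_⟩
    show ((2 : ℂ) • S'.map Complex.ofReal - Complex.I • (sympJ n).map Complex.ofReal).PosSemidef
    rw [h0, show Complex.I • (sympJ n).map Complex.ofReal = Kc n from rfl]
    exact h.2

lemma conj_smul (Rc X : Matrix (Fin n ⊕ Fin n) (Fin n ⊕ Fin n) ℂ) (c : ℂ) :
    Rc * (c • X) * Rc = c • (Rc * X * Rc) := by
  rw [Matrix.mul_smul, Matrix.smul_mul]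

open scoped MatrixOrder in
set_option maxHeartbeats 1000000 in
lemma forward_direction {S : Matrix (Fin n ⊕ Fin n) (Fin n ⊕ Fin n) ℝ} (hmem : S ∈ Kset n)
    (hext : ∀ S₁ S₂ : Matrix (Fin n ⊕ Fin n) (Fin n ⊕ Fin n) ℝ,
      S₁ ∈ Kset n → S₂ ∈ Kset n → S = (1 / 2 : ℝ) • (S₁ + S₂) → S₁ = S ∧ S₂ = S) :
    ∃ L : Matrix (Fin n ⊕ Fin n) (Fin n ⊕ Fin n) ℝ,
      IsSymplectic L ∧ S = (1 / 2 : ℝ) • (Lᵀ * L) := by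
  classical
  have hSpd := posDef_of_mem hmem
  have hsymm_pre : Sᵀ = S := hmem.1
  have hApd : ((2:ℝ) • S).PosDef := by
    refine Matrix.PosDef.of_dotProduct_mulVec_pos ?_ ?_
    · show ((2:ℝ) • S)ᴴ = (2:ℝ) • S
      rw [real_conjTranspose, Matrix.transpose_smul, hsymm_pre]
    · intro x hx
      rw [Matrix.smul_mulVec, dotProduct_smul, smul_eq_mul]
      have := hSpd.dotProduct_mulVec_pos hx
      simp only [star_trivial] at this ⊢
      linarith
  set R := CFC.sqrt ((2:ℝ) • S) with hRdef
  have hRpsd : R.PosSemidef := (CFC.sqrt_nonneg _).posSemidef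
  have hRR : R * R = (2:ℝ) • S := CFC.sqrt_mul_sqrt_self _ hApd.posSemidef.nonneg
  have hsymm : Sᵀ = S := hsymm_pre
  have hRsym : Rᵀ = R := by
    have h := hRpsd.1.eq
    rwa [real_conjTranspose] at h
  have hdet : IsUnit R.det := by
    have h1 : R.det * R.det = ((2:ℝ) • S).det := by rw [← Matrix.det_mul, hRR]
    have h2 : 0 < ((2:ℝ) • S).det := hApd.det_pos
    refine isUnit_iff_ne_zero.mpr fun h0 => ?_
    rw [h0, zero_mul] at h1
    linarith [h1 ▸ h2]
  have hRRi : R * R⁻¹ = 1 := Matrix.mul_nonsing_inv R hdet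
  have hRiR : R⁻¹ * R = 1 := Matrix.nonsing_inv_mul R hdet
  set Ri := R⁻¹ with hRidef
  have hRisym : Riᵀ = Ri := by rw [hRidef, Matrix.transpose_nonsing_inv, hRsym]
  have hRipsd : Ri.PosSemidef := hRpsd.inv
  set B : Matrix (Fin n ⊕ Fin n) (Fin n ⊕ Fin n) ℝ := Ri * sympJ n * Ri with hBdef
  have hBt : Bᵀ = -B := by
    rw [hBdef, Matrix.transpose_mul, Matrix.transpose_mul, hRisym, sympJ_transpose]
    noncomm_ring
  set T : Matrix (Fin n ⊕ Fin n) (Fin n ⊕ Fin n) ℝ := 1 + B * B with hTdef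
  have hTt : Tᵀ = T := by
    rw [hTdef, Matrix.transpose_add, Matrix.transpose_one, Matrix.transpose_mul, hBt]
    noncomm_ring
  have hJR : sympJ n = R * B * R := by
    have e : R * B * R = (R * Ri) * sympJ n * (Ri * R) := by rw [hBdef]; noncomm_ring
    rw [e, hRRi, hRiR, Matrix.one_mul, Matrix.mul_one]
  -- complex side
  set Rc := cm (n := n) R with hRcdef
  set Ric := cm (n := n) Ri with hRicdef
  set Bc := cm (n := n) B with hBcdef
  set Tc := cm (n := n) T with hTcdef
  set Kb : Matrix (Fin n ⊕ Fin n) (Fin n ⊕ Fin n) ℂ := Complex.I • Bc with hKbdef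
  have hRcH : Rcᴴ = Rc := by rw [hRcdef, cm_conjTranspose, hRsym]
  have hRicH : Ricᴴ = Ric := by rw [hRicdef, cm_conjTranspose, hRisym]
  have hRcRic : Rc * Ric = 1 := by
    rw [hRcdef, hRicdef, ← _root_.map_mul cm, hRRi, _root_.map_one cm]
  have hRicRc : Ric * Rc = 1 := by
    rw [hRcdef, hRicdef, ← _root_.map_mul cm, hRiR, _root_.map_one cm]
  have hKbH : Kbᴴ = Kb := by
    rw [hKbdef, Matrix.conjTranspose_smul, hBcdef, cm_conjTranspose, hBt, map_neg]
    simp [Complex.conj_I]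
  have hKbT : Kbᵀ = -Kb := by
    rw [hKbdef, Matrix.transpose_smul, hBcdef, cm_transpose, hBt, map_neg, smul_neg]
  have hTcBc : Tc = 1 + Bc * Bc := by
    rw [hTcdef, hTdef, _root_.map_add cm, _root_.map_one cm, _root_.map_mul cm, hBcdef]
  have hKbKb : Kb * Kb = 1 - Tc := by
    rw [hKbdef, Matrix.smul_mul, Matrix.mul_smul, smul_smul, Complex.I_mul_I, hTcBc,
      neg_smul, one_smul]
    abel
  have hKRc : Kc n = Rc * Kb * Rc := by
    rw [hKbdef, conj_smul, Kc_eq, hJR, _root_.map_mul cm, _root_.map_mul cm, hRcdef, hBcdef]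
  have h2S : cm ((2:ℝ) • S) = Rc * Rc := by rw [← hRR, _root_.map_mul cm, hRcdef]
  set P : Matrix (Fin n ⊕ Fin n) (Fin n ⊕ Fin n) ℂ := 1 - Kb with hPdef
  set Q : Matrix (Fin n ⊕ Fin n) (Fin n ⊕ Fin n) ℂ := 1 + Kb with hQdef
  have hPH : Pᴴ = P := by rw [hPdef, Matrix.conjTranspose_sub, Matrix.conjTranspose_one, hKbH]
  have hQH : Qᴴ = Q := by rw [hQdef, Matrix.conjTranspose_add, Matrix.conjTranspose_one, hKbH]
  have hPQtr : Pᵀ = Q := by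
    rw [hPdef, hQdef, Matrix.transpose_sub, Matrix.transpose_one, hKbT, sub_neg_eq_add]
  have hD := Kset_psd hmem
  have hDRP : Rc * P * Rc = cm ((2:ℝ) • S) - Kc n := by
    rw [hPdef, Matrix.mul_sub, Matrix.mul_one, Matrix.sub_mul, h2S, hKRc]
  have hPpsd : P.PosSemidef := by
    have h7 := hD.conjTranspose_mul_mul_same Ric
    rw [hRicH, ← hDRP] at h7
    have e : Ric * (Rc * P * Rc) * Ric = (Ric * Rc) * P * (Rc * Ric) := by noncomm_ring
    rwa [e, hRicRc, hRcRic, Matrix.one_mul, Matrix.mul_one] at h7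
  have hQpsd : Q.PosSemidef := by
    have := hPpsd.transpose
    rwa [hPQtr] at this
  have hPQ : P * Q = Tc := by
    have e : P * Q = 1 - Kb * Kb := by rw [hPdef, hQdef]; noncomm_ring
    rw [e, hKbKb, sub_sub_cancel]
  have hQP : Q * P = Tc := by
    have e : Q * P = 1 - Kb * Kb := by rw [hPdef, hQdef]; noncomm_ring
    rw [e, hKbKb, sub_sub_cancel]
  have hPP : P * P = 1 - Kb - Kb + (1 - Tc) := by
    have e : P * P = 1 - Kb - Kb + Kb * Kb := by rw [hPdef]; noncomm_ring
    rw [e, hKbKb]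
  have hPplusQ : P + Q = 1 + 1 := by rw [hPdef, hQdef]; abel
  have hTcPQ : Tc * P + Tc * Q = Tc + Tc := by
    rw [hPdef, hQdef]
    noncomm_ring
  have hW1sum : P * P + P * Q * P + Q * P * Q = (1 - Kb - Kb + (1 - Tc)) + (Tc + Tc) := by
    rw [hPQ, hQP, hPP, add_assoc, hTcPQ]
  -- the perturbations
  set Pe : Matrix (Fin n ⊕ Fin n) (Fin n ⊕ Fin n) ℝ := R * T * R with hPedef
  have hPet : Peᵀ = Pe := by
    rw [hPedef, Matrix.transpose_mul, Matrix.transpose_mul, hRsym, hTt, Matrix.mul_assoc]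
  have hPec : cm Pe = Rc * Tc * Rc := by
    rw [hPedef, _root_.map_mul cm, _root_.map_mul cm, hRcdef, hTcdef]
  have hcmhalf : ∀ M : Matrix (Fin n ⊕ Fin n) (Fin n ⊕ Fin n) ℝ,
      cm ((1/2 : ℝ) • M) = (1/2 : ℂ) • cm M := by
    intro M
    rw [cm_smul]
    norm_num
  have hmem₁ : (S + (1/4 : ℝ) • Pe) ∈ Kset n := by
    rw [mem_Kset_iff]
    constructor
    · show (S + (1/4 : ℝ) • Pe)ᵀ = _
      rw [Matrix.transpose_add, Matrix.transpose_smul, hPet, hmem.1]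
    · have hlin : (2:ℝ) • (S + (1/4 : ℝ) • Pe) = (2:ℝ) • S + (1/2 : ℝ) • Pe := by module
      have hinner : (1 : Matrix (Fin n ⊕ Fin n) (Fin n ⊕ Fin n) ℂ) + (1/2 : ℂ) • Tc - Kb
          = (1/2 : ℂ) • (P * P + P * Q * P + Q * P * Q) := by
        rw [hW1sum]
        module
      have hkey : cm ((2:ℝ) • (S + (1/4 : ℝ) • Pe)) - Kc n
          = Rc * ((1/2 : ℂ) • (P * P + P * Q * P + Q * P * Q)) * Rc := by
        rw [← hinner, hlin, _root_.map_add cm, hcmhalf, h2S, hPec, hKRc]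
        simp only [Matrix.mul_sub, Matrix.sub_mul, Matrix.mul_add, Matrix.add_mul,
          Matrix.mul_one, conj_smul]
      have hPPpsd : (P * P).PosSemidef := by
        have := Matrix.posSemidef_conjTranspose_mul_self P
        rwa [hPH] at this
      have hPQPpsd : (P * Q * P).PosSemidef := by
        have := hQpsd.conjTranspose_mul_mul_same P
        rwa [hPH] at this
      have hQPQpsd : (Q * P * Q).PosSemidef := by
        have := hPpsd.conjTranspose_mul_mul_same Q
        rwa [hQH] at this
      have hWpsd := psd_half ((hPPpsd.add hPQPpsd).add hQPQpsd)
      have hfin := hWpsd.conjTranspose_mul_mul_same Rc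
      rw [hRcH] at hfin
      rw [hkey]
      exact hfin
  have hmem₂ : (S - (1/4 : ℝ) • Pe) ∈ Kset n := by
    rw [mem_Kset_iff]
    constructor
    · show (S - (1/4 : ℝ) • Pe)ᵀ = _
      rw [Matrix.transpose_sub, Matrix.transpose_smul, hPet, hmem.1]
    · have hlin : (2:ℝ) • (S - (1/4 : ℝ) • Pe) = (2:ℝ) • S - (1/2 : ℝ) • Pe := by module
      have hinner : (1 : Matrix (Fin n ⊕ Fin n) (Fin n ⊕ Fin n) ℂ) - (1/2 : ℂ) • Tc - Kb
          = (1/2 : ℂ) • (P * P) := by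
        rw [hPP]
        module
      have hkey : cm ((2:ℝ) • (S - (1/4 : ℝ) • Pe)) - Kc n
          = Rc * ((1/2 : ℂ) • (P * P)) * Rc := by
        rw [← hinner, hlin, _root_.map_sub cm, hcmhalf, h2S, hPec, hKRc]
        simp only [Matrix.mul_sub, Matrix.sub_mul, Matrix.mul_one, conj_smul]
      have hPPpsd : (P * P).PosSemidef := by
        have := Matrix.posSemidef_conjTranspose_mul_self P
        rwa [hPH] at this
      have hWpsd := psd_half hPPpsd
      have hfin := hWpsd.conjTranspose_mul_mul_same Rc
      rw [hRcH] at hfin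
      rw [hkey]
      exact hfin
  have heq : S = (1/2 : ℝ) • ((S + (1/4 : ℝ) • Pe) + (S - (1/4 : ℝ) • Pe)) := by module
  obtain ⟨hS1, -⟩ := hext _ _ hmem₁ hmem₂ heq
  have hPe0 : Pe = 0 := by
    have h8 : (1/4 : ℝ) • Pe = 0 := by
      have := hS1
      rwa [add_eq_left] at this
    have := congrArg (fun M => (4:ℝ) • M) h8
    simpa using this
  have hT0 : T = 0 := by
    have h9 : Ri * (R * T * R) * Ri = T := by
      have e : Ri * (R * T * R) * Ri = (Ri * R) * T * (R * Ri) := by noncomm_ring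
      rw [e, hRiR, hRRi, Matrix.one_mul, Matrix.mul_one]
    rw [← h9, ← hPedef, hPe0]
    simp
  have hBB : B * B = -1 := by
    have := hT0
    rw [hTdef] at this
    have h10 : B * B = (1 + B * B) - 1 := by abel
    rw [h10, this]
    abel
  -- conclude R J R = J via sqrt uniqueness
  set C : Matrix (Fin n ⊕ Fin n) (Fin n ⊕ Fin n) ℝ := -(sympJ n) * Ri * sympJ n with hCdef
  have hCpsd : C.PosSemidef := by
    have h11 := hRipsd.conjTranspose_mul_mul_same (sympJ n)
    have e : (sympJ n)ᴴ * Ri * sympJ n = C := by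
      rw [real_conjTranspose, sympJ_transpose, hCdef]
    rwa [e] at h11
  have hJRiRiJ : sympJ n * (Ri * Ri) * sympJ n = -(R * R) := by
    have e : R * (B * B) * R = (R * Ri) * (sympJ n * (Ri * Ri) * sympJ n) * (Ri * R) := by
      rw [hBdef]
      noncomm_ring
    rw [hBB, hRRi, hRiR, Matrix.one_mul, Matrix.mul_one] at e
    have e2 : R * (-1 : Matrix (Fin n ⊕ Fin n) (Fin n ⊕ Fin n) ℝ) * R = -(R * R) := by
      noncomm_ring
    rw [e2] at e
    exact e.symm
  have hCC : C * C = R * R := by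
    have e : C * C = (sympJ n * Ri) * (sympJ n * sympJ n) * (Ri * sympJ n) := by
      rw [hCdef]
      noncomm_ring
    rw [sympJ_mul_sympJ] at e
    have e2 : (sympJ n * Ri) * (-1 : Matrix (Fin n ⊕ Fin n) (Fin n ⊕ Fin n) ℝ) * (Ri * sympJ n)
        = -(sympJ n * (Ri * Ri) * sympJ n) := by
      noncomm_ring
    rw [e2, hJRiRiJ, neg_neg] at e
    exact e
  have hCR : C = R := by
    rw [← CFC.sqrt_mul_self C hCpsd.nonneg, ← CFC.sqrt_mul_self R hRpsd.nonneg, hCC]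
  have hRJR : R * sympJ n * R = sympJ n := by
    have e : R * sympJ n * C = -(R * (sympJ n * sympJ n) * (Ri * sympJ n)) := by
      rw [hCdef]
      noncomm_ring
    rw [sympJ_mul_sympJ] at e
    have e2 : -(R * (-1 : Matrix (Fin n ⊕ Fin n) (Fin n ⊕ Fin n) ℝ) * (Ri * sympJ n))
        = (R * Ri) * sympJ n := by
      noncomm_ring
    rw [e2, hRRi, Matrix.one_mul, hCR] at e
    exact e
  refine ⟨R, ?_, ?_⟩
  · show Rᵀ * sympJ n * R = sympJ n
    rw [hRsym]
    exact hRJR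
  · rw [hRsym, hRR]
    module

end ExtremeAux

theorem extreme_points_of_Kset (n : ℕ)
    (S : Matrix (Fin n ⊕ Fin n) (Fin n ⊕ Fin n) ℝ) :
    (S ∈ Kset n ∧ ∀ S₁ S₂ : Matrix (Fin n ⊕ Fin n) (Fin n ⊕ Fin n) ℝ,
        S₁ ∈ Kset n → S₂ ∈ Kset n → S = (1 / 2 : ℝ) • (S₁ + S₂) → S₁ = S ∧ S₂ = S) ↔
      ∃ L : Matrix (Fin n ⊕ Fin n) (Fin n ⊕ Fin n) ℝ,
        IsSymplectic L ∧ S = (1 / 2 : ℝ) • (Lᵀ * L) := by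
  constructor
  · rintro ⟨hmem, hext⟩
    exact ExtremeAux.forward_direction hmem hext
  · rintro ⟨L, hL, hS⟩
    refine ⟨?_, ?_⟩
    · rw [hS]
      exact ExtremeAux.mem_Kset_of_symplectic hL
    · intro S₁ S₂ h₁ h₂ heq
      exact ExtremeAux.extreme_of_symplectic hL hS h₁ h₂ heq
end
end
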